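/- arXiv:1810.13256 — 4 statements merged into one kernel-verified Lean document; each statement's English description precedes it below -/
import Mathlib

section
/- Let α ∈ [1, 3/2], δ ∈ (0, 1], ε > 0, and let P ≥ 1 be a real number such that A₁ := P^{(α−1)/2} and A₂ := P^{α−1} are positive integers. Set Q_max = P^{(α/3−ε)/2} and β̄ = δ·P^{−(2−4α/3)/2}. Define B̄ ⊆ (1,4]³ as the set of triples (ḡ₀, ḡ₁, ḡ₂) ∈ (1,4]³ for which there exist integers q₀, q₁, q₂, not all zero, with |q₀| ≤ 2Q_max, |q₁| ≤ 4Q_max, |q₂| ≤ 2Q_max and |ḡ₀q₀ + A₁ḡ₁q₁ + A₂ḡ₂q₂| < β̄. Then the three-dimensional Lebesgue measure of B̄ is at most 129024·δ·P^{−ε/2}. -/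
open MeasureTheory Real

private lemma key_measure (A β c : ℝ) (hA : 1 ≤ A) (hβ0 : 0 < β) (hβ1 : β ≤ 1) :
    volume {y : ℝ | y ∈ Set.Ioc (1:ℝ) 4 ∧ ∃ q : ℤ, q ≠ 0 ∧ |c + A * y * q| < β}
      ≤ ENNReal.ofReal (32 * β / A) := by
  have hA0 : (0:ℝ) < A := lt_of_lt_of_le one_pos hA
  set a : ℝ := (|c| - β) / A with ha
  set b : ℝ := (|c| + β) / A with hb
  set K : ℕ := ⌊b⌋₊ with hK
  set k₀ : ℕ := ⌊a/4⌋₊ + 1 with hk₀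
  have hba : b - a = 2 * β / A := by rw [ha, hb]; ring
  have hb0 : 0 ≤ b := by rw [hb]; positivity
  have hsub : {y : ℝ | y ∈ Set.Ioc (1:ℝ) 4 ∧ ∃ q : ℤ, q ≠ 0 ∧ |c + A * y * q| < β}
      ⊆ ⋃ k ∈ Finset.Icc k₀ K, Set.Ioo (a / (k:ℝ)) (b / k) := by
    rintro y ⟨⟨hy1, hy4⟩, q, hq, hlt⟩
    set k : ℕ := q.natAbs with hkdef
    have hk1 : 1 ≤ k := Nat.one_le_iff_ne_zero.2 (Int.natAbs_ne_zero.2 hq)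
    have hk1r : (1:ℝ) ≤ (k:ℝ) := by exact_mod_cast hk1
    have hkr : ((k:ℕ):ℝ) = |(q:ℝ)| := by rw [hkdef, Nat.cast_natAbs, Int.cast_abs]
    have hy0 : (0:ℝ) < y := lt_trans one_pos hy1
    have habs : |A * y * (q:ℝ)| = A * y * k := by
      rw [abs_mul, abs_of_pos (mul_pos hA0 hy0), hkr]
    have h1 : |A * y * (q:ℝ)| ≤ |c + A * y * q| + |c| := by
      calc |A * y * (q:ℝ)| = |(c + A * y * q) + (-c)| := by ring_nf
        _ ≤ |c + A * y * q| + |(-c)| := abs_add_le _ _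
        _ = |c + A * y * q| + |c| := by rw [abs_neg]
    have h2 : |c| ≤ |c + A * y * q| + |A * y * (q:ℝ)| := by
      calc |c| = |(c + A * y * q) + (-(A * y * q))| := by ring_nf
        _ ≤ |c + A * y * q| + |(-(A * y * (q:ℝ)))| := abs_add_le _ _
        _ = |c + A * y * q| + |A * y * (q:ℝ)| := by rw [abs_neg]
    have hub : A * y * (k:ℝ) < |c| + β := by nlinarith [h1, hlt, habs]
    have hlb : |c| - β < A * y * (k:ℝ) := by nlinarith [h2, hlt, habs]
    have hayk1 : a < y * k := by rw [ha, div_lt_iff₀ hA0]; nlinarith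
    have hayk2 : y * (k:ℝ) < b := by rw [hb, lt_div_iff₀ hA0]; nlinarith
    have hkK : k ≤ K := by
      apply Nat.le_floor
      nlinarith
    have hk₀k : k₀ ≤ k := by
      rw [hk₀, Nat.add_one_le_iff]
      rw [Nat.floor_lt' (Nat.one_le_iff_ne_zero.1 hk1)]
      nlinarith
    have hk0r : (0:ℝ) < (k:ℝ) := by linarith
    refine Set.mem_iUnion₂.2 ⟨k, Finset.mem_Icc.2 ⟨hk₀k, hkK⟩, ?_⟩
    constructor
    · rwa [div_lt_iff₀ hk0r]
    · rwa [lt_div_iff₀ hk0r]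
  refine le_trans (measure_mono hsub) ?_
  refine le_trans (measure_biUnion_finset_le _ _) ?_
  have hk₀pos : (0:ℝ) < (k₀:ℝ) := by positivity
  have hbanon : 0 ≤ b - a := by rw [hba]; positivity
  have hsum : ∑ k ∈ Finset.Icc k₀ K, volume (Set.Ioo (a / (k:ℝ)) (b / k))
      ≤ (Finset.Icc k₀ K).card • ENNReal.ofReal ((b - a)/(k₀:ℝ)) := by
    apply Finset.sum_le_card_nsmul
    intro k hk
    rw [Real.volume_Ioo]
    apply ENNReal.ofReal_le_ofReal
    have hk' : k₀ ≤ k := (Finset.mem_Icc.1 hk).1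
    have hk'r : (k₀:ℝ) ≤ (k:ℝ) := by exact_mod_cast hk'
    rw [div_sub_div_same]
    gcongr
  refine le_trans hsum ?_
  -- card bound
  have hcard1 : ((Finset.Icc k₀ K).card : ℝ) ≤ (K:ℝ) + 1 := by
    rw [Nat.card_Icc]
    have : K + 1 - k₀ ≤ K + 1 := Nat.sub_le _ _
    exact_mod_cast this
  have hKb : (K:ℝ) ≤ b := Nat.floor_le hb0
  have hk0gt : a/4 < (k₀:ℝ) := by
    rw [hk₀]
    push_cast
    exact Nat.lt_floor_add_one _
  have hk01 : (1:ℝ) ≤ (k₀:ℝ) := by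
    have : 1 ≤ k₀ := Nat.le_add_left 1 _
    exact_mod_cast this
  have h16 : (K:ℝ) + 1 ≤ 16 * (k₀:ℝ) := by
    rcases le_or_gt (|c|) (2*A) with hc | hc
    · have hb3 : b ≤ 3 := by
        rw [hb, div_le_iff₀ hA0]
        nlinarith
      linarith
    · have haA : a * A = |c| - β := div_mul_cancel₀ _ hA0.ne'
      have hbA : b * A = |c| + β := div_mul_cancel₀ _ hA0.ne'
      have h4a : b + 1 ≤ 4 * a := by nlinarith
      linarith
  have hfinal : ((Finset.Icc k₀ K).card : ℝ) * ((b - a)/(k₀:ℝ)) ≤ 32 * β / A := by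
    have ht : (k₀:ℝ) * ((b - a)/(k₀:ℝ)) = b - a := mul_div_cancel₀ _ hk₀pos.ne'
    have hq : 0 ≤ (b - a)/(k₀:ℝ) := by positivity
    have h1 : ((Finset.Icc k₀ K).card : ℝ) * ((b - a)/(k₀:ℝ)) ≤ (16 * (k₀:ℝ)) * ((b - a)/(k₀:ℝ)) := by
      apply mul_le_mul_of_nonneg_right _ hq
      linarith
    have h2 : (16 * (k₀:ℝ)) * ((b - a)/(k₀:ℝ)) = 16 * (b - a) := by
      rw [mul_assoc, ht]
    calc ((Finset.Icc k₀ K).card : ℝ) * ((b - a)/(k₀:ℝ)) ≤ 16 * (b - a) := h1.trans_eq h2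
      _ = 32 * β / A := by rw [hba]; ring
  calc (Finset.Icc k₀ K).card • ENNReal.ofReal ((b - a)/(k₀:ℝ))
      = ENNReal.ofReal (((Finset.Icc k₀ K).card : ℝ) * ((b - a)/(k₀:ℝ))) := by
        rw [nsmul_eq_mul, ← ENNReal.ofReal_natCast, ← ENNReal.ofReal_mul (by positivity)]
    _ ≤ ENNReal.ofReal (32 * β / A) := ENNReal.ofReal_le_ofReal hfinal


private lemma meas_slab_last (c₁ A' c₂ A β : ℝ) :
    MeasurableSet {g : ℝ × ℝ × ℝ |
      (g.1 ∈ Set.Ioc (1:ℝ) 4 ∧ g.2.1 ∈ Set.Ioc (1:ℝ) 4 ∧ g.2.2 ∈ Set.Ioc (1:ℝ) 4) ∧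
      ∃ q : ℤ, q ≠ 0 ∧ |g.1 * c₁ + A' * g.2.1 * c₂ + A * g.2.2 * q| < β} := by
  have he : {g : ℝ × ℝ × ℝ |
      (g.1 ∈ Set.Ioc (1:ℝ) 4 ∧ g.2.1 ∈ Set.Ioc (1:ℝ) 4 ∧ g.2.2 ∈ Set.Ioc (1:ℝ) 4) ∧
      ∃ q : ℤ, q ≠ 0 ∧ |g.1 * c₁ + A' * g.2.1 * c₂ + A * g.2.2 * q| < β}
      = {g : ℝ × ℝ × ℝ | g.1 ∈ Set.Ioc (1:ℝ) 4 ∧ g.2.1 ∈ Set.Ioc (1:ℝ) 4 ∧ g.2.2 ∈ Set.Ioc (1:ℝ) 4}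
        ∩ ⋃ (q : ℤ) (_ : q ≠ 0),
            {g : ℝ × ℝ × ℝ | |g.1 * c₁ + A' * g.2.1 * c₂ + A * g.2.2 * q| < β} := by
    ext g
    simp only [Set.mem_setOf_eq, Set.mem_inter_iff, Set.mem_iUnion]
    tauto
  rw [he]
  refine MeasurableSet.inter ?_ ?_
  · refine (measurableSet_Ioc.preimage measurable_fst).inter ?_
    exact ((measurableSet_Ioc.preimage (measurable_fst.comp measurable_snd)).inter
      (measurableSet_Ioc.preimage (measurable_snd.comp measurable_snd)))
  · refine MeasurableSet.iUnion fun q => MeasurableSet.iUnion fun _ => ?_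
    have hf : Measurable fun g : ℝ × ℝ × ℝ =>
        |g.1 * c₁ + A' * g.2.1 * c₂ + A * g.2.2 * (q:ℝ)| := by
      apply Measurable.abs
      fun_prop
    exact measurableSet_lt hf measurable_const

private lemma meas_slab_mid (c₁ A β : ℝ) :
    MeasurableSet {g : ℝ × ℝ × ℝ |
      (g.1 ∈ Set.Ioc (1:ℝ) 4 ∧ g.2.1 ∈ Set.Ioc (1:ℝ) 4 ∧ g.2.2 ∈ Set.Ioc (1:ℝ) 4) ∧
      ∃ q : ℤ, q ≠ 0 ∧ |g.1 * c₁ + A * g.2.1 * q| < β} := by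
  have he : {g : ℝ × ℝ × ℝ |
      (g.1 ∈ Set.Ioc (1:ℝ) 4 ∧ g.2.1 ∈ Set.Ioc (1:ℝ) 4 ∧ g.2.2 ∈ Set.Ioc (1:ℝ) 4) ∧
      ∃ q : ℤ, q ≠ 0 ∧ |g.1 * c₁ + A * g.2.1 * q| < β}
      = {g : ℝ × ℝ × ℝ | g.1 ∈ Set.Ioc (1:ℝ) 4 ∧ g.2.1 ∈ Set.Ioc (1:ℝ) 4 ∧ g.2.2 ∈ Set.Ioc (1:ℝ) 4}
        ∩ ⋃ (q : ℤ) (_ : q ≠ 0),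
            {g : ℝ × ℝ × ℝ | |g.1 * c₁ + A * g.2.1 * q| < β} := by
    ext g
    simp only [Set.mem_setOf_eq, Set.mem_inter_iff, Set.mem_iUnion]
    tauto
  rw [he]
  refine MeasurableSet.inter ?_ ?_
  · refine (measurableSet_Ioc.preimage measurable_fst).inter ?_
    exact ((measurableSet_Ioc.preimage (measurable_fst.comp measurable_snd)).inter
      (measurableSet_Ioc.preimage (measurable_snd.comp measurable_snd)))
  · refine MeasurableSet.iUnion fun q => MeasurableSet.iUnion fun _ => ?_
    have hf : Measurable fun g : ℝ × ℝ × ℝ => |g.1 * c₁ + A * g.2.1 * (q:ℝ)| := by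
      apply Measurable.abs
      fun_prop
    exact measurableSet_lt hf measurable_const

private lemma vol_slab_last (c₁ A' c₂ A β : ℝ) (hA : 1 ≤ A) (hβ0 : 0 < β) (hβ1 : β ≤ 1) :
    volume {g : ℝ × ℝ × ℝ |
      (g.1 ∈ Set.Ioc (1:ℝ) 4 ∧ g.2.1 ∈ Set.Ioc (1:ℝ) 4 ∧ g.2.2 ∈ Set.Ioc (1:ℝ) 4) ∧
      ∃ q : ℤ, q ≠ 0 ∧ |g.1 * c₁ + A' * g.2.1 * c₂ + A * g.2.2 * q| < β}
      ≤ ENNReal.ofReal (288 * β / A) := by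
  set S := {g : ℝ × ℝ × ℝ |
      (g.1 ∈ Set.Ioc (1:ℝ) 4 ∧ g.2.1 ∈ Set.Ioc (1:ℝ) 4 ∧ g.2.2 ∈ Set.Ioc (1:ℝ) 4) ∧
      ∃ q : ℤ, q ≠ 0 ∧ |g.1 * c₁ + A' * g.2.1 * c₂ + A * g.2.2 * q| < β} with hSdef
  have hS : MeasurableSet S := meas_slab_last c₁ A' c₂ A β
  have h3 : volume (Set.Ioc (1:ℝ) 4) = ENNReal.ofReal 3 := by
    rw [Real.volume_Ioc]; norm_num
  calc volume S = ∫⁻ x, volume (Prod.mk x ⁻¹' S) := by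
        rw [MeasureTheory.Measure.volume_eq_prod, Measure.prod_apply hS]
    _ ≤ ∫⁻ x, (Set.Ioc (1:ℝ) 4).indicator (fun _ => ENNReal.ofReal (96 * β / A)) x := by
        apply lintegral_mono
        intro x
        by_cases hx : x ∈ Set.Ioc (1:ℝ) 4
        · rw [Set.indicator_of_mem hx]
          show volume (Prod.mk x ⁻¹' S) ≤ _
          have hS' : MeasurableSet (Prod.mk x ⁻¹' S) :=
            hS.preimage measurable_prodMk_left
          calc volume (Prod.mk x ⁻¹' S)
              = ∫⁻ y, volume (Prod.mk y ⁻¹' (Prod.mk x ⁻¹' S)) := by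
                rw [MeasureTheory.Measure.volume_eq_prod, Measure.prod_apply hS']
            _ ≤ ∫⁻ y, (Set.Ioc (1:ℝ) 4).indicator
                  (fun _ => ENNReal.ofReal (32 * β / A)) y := by
                apply lintegral_mono
                intro y
                by_cases hy : y ∈ Set.Ioc (1:ℝ) 4
                · rw [Set.indicator_of_mem hy]
                  refine le_trans (measure_mono ?_)
                    (key_measure A β (x * c₁ + A' * y * c₂) hA hβ0 hβ1)
                  rintro z ⟨⟨-, -, hz3⟩, q, hq, hlt⟩
                  exact ⟨hz3, q, hq, by
                    have : x * c₁ + A' * y * c₂ + A * z * (q:ℝ)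
                        = x * c₁ + A' * y * c₂ + A * z * q := rfl
                    exact hlt⟩
                · rw [Set.indicator_of_notMem hy]
                  refine le_of_eq (measure_mono_null ?_ measure_empty)
                  rintro z ⟨⟨-, hy', -⟩, -⟩
                  exact hy hy'
            _ = ENNReal.ofReal (32 * β / A) * volume (Set.Ioc (1:ℝ) 4) :=
                lintegral_indicator_const measurableSet_Ioc _
            _ = ENNReal.ofReal (96 * β / A) := by
                rw [h3, ← ENNReal.ofReal_mul (by positivity)]
                norm_num
                ring_nf
        · rw [Set.indicator_of_notMem hx]
          refine le_of_eq (measure_mono_null ?_ measure_empty)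
          rintro p ⟨⟨hx', -, -⟩, -⟩
          exact hx hx'
    _ = ENNReal.ofReal (96 * β / A) * volume (Set.Ioc (1:ℝ) 4) :=
        lintegral_indicator_const measurableSet_Ioc _
    _ = ENNReal.ofReal (288 * β / A) := by
        rw [h3, ← ENNReal.ofReal_mul (by positivity)]
        norm_num
        ring_nf

private lemma vol_slab_mid (c₁ A β : ℝ) (hA : 1 ≤ A) (hβ0 : 0 < β) (hβ1 : β ≤ 1) :
    volume {g : ℝ × ℝ × ℝ |
      (g.1 ∈ Set.Ioc (1:ℝ) 4 ∧ g.2.1 ∈ Set.Ioc (1:ℝ) 4 ∧ g.2.2 ∈ Set.Ioc (1:ℝ) 4) ∧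
      ∃ q : ℤ, q ≠ 0 ∧ |g.1 * c₁ + A * g.2.1 * q| < β}
      ≤ ENNReal.ofReal (288 * β / A) := by
  set S := {g : ℝ × ℝ × ℝ |
      (g.1 ∈ Set.Ioc (1:ℝ) 4 ∧ g.2.1 ∈ Set.Ioc (1:ℝ) 4 ∧ g.2.2 ∈ Set.Ioc (1:ℝ) 4) ∧
      ∃ q : ℤ, q ≠ 0 ∧ |g.1 * c₁ + A * g.2.1 * q| < β} with hSdef
  have hS : MeasurableSet S := meas_slab_mid c₁ A β
  have h3 : volume (Set.Ioc (1:ℝ) 4) = ENNReal.ofReal 3 := by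
    rw [Real.volume_Ioc]; norm_num
  calc volume S = ∫⁻ x, volume (Prod.mk x ⁻¹' S) := by
        rw [MeasureTheory.Measure.volume_eq_prod, Measure.prod_apply hS]
    _ ≤ ∫⁻ x, (Set.Ioc (1:ℝ) 4).indicator (fun _ => ENNReal.ofReal (96 * β / A)) x := by
        apply lintegral_mono
        intro x
        by_cases hx : x ∈ Set.Ioc (1:ℝ) 4
        · rw [Set.indicator_of_mem hx]
          show volume (Prod.mk x ⁻¹' S) ≤ _
          have hprod : Prod.mk x ⁻¹' S
              = {y : ℝ | y ∈ Set.Ioc (1:ℝ) 4 ∧ ∃ q : ℤ, q ≠ 0 ∧ |x * c₁ + A * y * q| < β}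
                ×ˢ Set.Ioc (1:ℝ) 4 := by
            ext p
            simp only [Set.mem_preimage, hSdef, Set.mem_setOf_eq, Set.mem_prod]
            constructor
            · rintro ⟨⟨-, hp1, hp2⟩, q, hq, hlt⟩
              exact ⟨⟨hp1, q, hq, hlt⟩, hp2⟩
            · rintro ⟨⟨hp1, q, hq, hlt⟩, hp2⟩
              exact ⟨⟨hx, hp1, hp2⟩, q, hq, hlt⟩
          rw [hprod, MeasureTheory.Measure.volume_eq_prod, Measure.prod_prod, h3]
          calc volume {y : ℝ | y ∈ Set.Ioc (1:ℝ) 4 ∧ ∃ q : ℤ, q ≠ 0 ∧ |x * c₁ + A * y * q| < β}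
                * ENNReal.ofReal 3
              ≤ ENNReal.ofReal (32 * β / A) * ENNReal.ofReal 3 := by
                exact mul_le_mul_left (key_measure A β (x * c₁) hA hβ0 hβ1) _
            _ = ENNReal.ofReal (96 * β / A) := by
                rw [← ENNReal.ofReal_mul (by positivity)]
                norm_num
                ring_nf
        · rw [Set.indicator_of_notMem hx]
          refine le_of_eq (measure_mono_null ?_ measure_empty)
          rintro p ⟨⟨hx', -, -⟩, -⟩
          exact hx hx'
    _ = ENNReal.ofReal (96 * β / A) * volume (Set.Ioc (1:ℝ) 4) :=
        lintegral_indicator_const measurableSet_Ioc _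
    _ = ENNReal.ofReal (288 * β / A) := by
        rw [h3, ← ENNReal.ofReal_mul (by positivity)]
        norm_num
        ring_nf

/-- The Lebesgue measure of the outage set `B̄ ⊆ (1,4]³` of triples admitting a small
nontrivial integer combination is at most `129024·δ·P^{-ε/2}` (regime `1 ≤ α ≤ 3/2`). -/
theorem outage_set_measure_regime_one_three_halves
    (α δ ε P : ℝ)
    (hα : α ∈ Set.Icc (1 : ℝ) (3 / 2)) (hδ : δ ∈ Set.Ioc (0 : ℝ) 1) (hε : 0 < ε)
    (hP : 1 ≤ P)
    (hA₁ : ∃ n : ℕ, 0 < n ∧ P ^ ((α - 1) / 2) = (n : ℝ))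
    (hA₂ : ∃ n : ℕ, 0 < n ∧ P ^ (α - 1) = (n : ℝ)) :
    volume {g : ℝ × ℝ × ℝ |
        g ∈ (Set.Ioc (1 : ℝ) 4) ×ˢ (Set.Ioc (1 : ℝ) 4) ×ˢ (Set.Ioc (1 : ℝ) 4) ∧
        ∃ q₀ q₁ q₂ : ℤ, ¬(q₀ = 0 ∧ q₁ = 0 ∧ q₂ = 0) ∧
          |(q₀ : ℝ)| ≤ 2 * P ^ ((α / 3 - ε) / 2) ∧
          |(q₁ : ℝ)| ≤ 4 * P ^ ((α / 3 - ε) / 2) ∧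
          |(q₂ : ℝ)| ≤ 2 * P ^ ((α / 3 - ε) / 2) ∧
          |g.1 * (q₀ : ℝ) + P ^ ((α - 1) / 2) * g.2.1 * (q₁ : ℝ)
              + P ^ (α - 1) * g.2.2 * (q₂ : ℝ)|
            < δ * P ^ (-(2 - 4 * α / 3) / 2)}
      ≤ ENNReal.ofReal (129024 * δ * P ^ (-ε / 2)) := by
  obtain ⟨hα1, hα2⟩ := hα
  obtain ⟨hδ0, hδ1⟩ := hδ
  have hP0 : (0:ℝ) < P := lt_of_lt_of_le one_pos hP
  set A1 : ℝ := P ^ ((α - 1) / 2) with hA1def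
  set A2 : ℝ := P ^ (α - 1) with hA2def
  set Q : ℝ := P ^ ((α / 3 - ε) / 2) with hQdef
  set βv : ℝ := δ * P ^ (-(2 - 4 * α / 3) / 2) with hβdef
  have hQ0 : 0 < Q := rpow_pos_of_pos hP0 _
  have hA1ge : 1 ≤ A1 := by
    have h := rpow_le_rpow_of_exponent_le hP (show (0:ℝ) ≤ (α - 1) / 2 by linarith)
    rwa [Real.rpow_zero] at h
  have hA2ge : 1 ≤ A2 := by
    have h := rpow_le_rpow_of_exponent_le hP (show (0:ℝ) ≤ α - 1 by linarith)
    rwa [Real.rpow_zero] at h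
  have hβ0 : 0 < βv := mul_pos hδ0 (rpow_pos_of_pos hP0 _)
  have hβ1 : βv ≤ 1 := by
    rw [hβdef]
    calc δ * P ^ (-(2 - 4 * α / 3) / 2) ≤ 1 * 1 := by
          apply mul_le_mul hδ1 _ (le_of_lt (rpow_pos_of_pos hP0 _)) zero_le_one
          exact rpow_le_one_of_one_le_of_nonpos hP (by linarith)
      _ = 1 := by norm_num
  set B : Set (ℝ × ℝ × ℝ) := {g : ℝ × ℝ × ℝ |
        g ∈ (Set.Ioc (1 : ℝ) 4) ×ˢ (Set.Ioc (1 : ℝ) 4) ×ˢ (Set.Ioc (1 : ℝ) 4) ∧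
        ∃ q₀ q₁ q₂ : ℤ, ¬(q₀ = 0 ∧ q₁ = 0 ∧ q₂ = 0) ∧
          |(q₀ : ℝ)| ≤ 2 * Q ∧ |(q₁ : ℝ)| ≤ 4 * Q ∧ |(q₂ : ℝ)| ≤ 2 * Q ∧
          |g.1 * (q₀ : ℝ) + A1 * g.2.1 * (q₁ : ℝ) + A2 * g.2.2 * (q₂ : ℝ)| < βv} with hBdef
  show volume B ≤ _
  rcases lt_or_ge (4 * Q) 1 with h4 | h4
  · -- degenerate case: the set is empty
    have hzero : ∀ q : ℤ, |(q:ℝ)| < 1 → q = 0 := by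
      intro q hq
      by_contra h
      have h1 : (1:ℤ) ≤ |q| := Int.one_le_abs h
      have h2 : (1:ℝ) ≤ |(q:ℝ)| := by
        calc (1:ℝ) ≤ ((|q|:ℤ):ℝ) := by exact_mod_cast h1
          _ = |(q:ℝ)| := Int.cast_abs
      linarith
    have hBempty : B ⊆ ∅ := by
      rintro g ⟨-, q₀, q₁, q₂, hne, h0, h1, h2, -⟩
      exact hne ⟨hzero q₀ (by linarith), hzero q₁ (by linarith), hzero q₂ (by linarith)⟩
    calc volume B ≤ volume (∅ : Set (ℝ × ℝ × ℝ)) := measure_mono hBempty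
      _ = 0 := measure_empty
      _ ≤ _ := zero_le
  · -- main case
    set N₀ : ℤ := ⌊2 * Q⌋ with hN₀def
    set N₁ : ℤ := ⌊4 * Q⌋ with hN₁def
    have hN₀0 : (0:ℤ) ≤ N₀ := Int.floor_nonneg.2 (by positivity)
    have hN₁0 : (0:ℤ) ≤ N₁ := Int.floor_nonneg.2 (by positivity)
    set F₀ : Finset ℤ := Finset.Icc (-N₀) N₀ with hF₀def
    set F₁ : Finset ℤ := Finset.Icc (-N₁) N₁ with hF₁def
    set S₁ : ℤ → Set (ℝ × ℝ × ℝ) := fun q₀ => {g : ℝ × ℝ × ℝ |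
      (g.1 ∈ Set.Ioc (1:ℝ) 4 ∧ g.2.1 ∈ Set.Ioc (1:ℝ) 4 ∧ g.2.2 ∈ Set.Ioc (1:ℝ) 4) ∧
      ∃ q : ℤ, q ≠ 0 ∧ |g.1 * (q₀:ℝ) + A1 * g.2.1 * q| < βv} with hS₁def
    set S₂ : ℤ × ℤ → Set (ℝ × ℝ × ℝ) := fun p => {g : ℝ × ℝ × ℝ |
      (g.1 ∈ Set.Ioc (1:ℝ) 4 ∧ g.2.1 ∈ Set.Ioc (1:ℝ) 4 ∧ g.2.2 ∈ Set.Ioc (1:ℝ) 4) ∧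
      ∃ q : ℤ, q ≠ 0 ∧ |g.1 * (p.1:ℝ) + A1 * g.2.1 * (p.2:ℝ) + A2 * g.2.2 * q| < βv} with hS₂def
    have hmem₀ : ∀ q₀ : ℤ, |(q₀:ℝ)| ≤ 2 * Q → q₀ ∈ F₀ := by
      intro q₀ h
      have habs : |q₀| ≤ N₀ := Int.le_floor.2 (by rw [Int.cast_abs]; exact h)
      rw [hF₀def, Finset.mem_Icc]
      constructor <;> [linarith [neg_abs_le q₀, (abs_le.1 habs).2, (abs_le.1 habs).1];
        exact (abs_le.1 habs).2]
    have hmem₁ : ∀ q₁ : ℤ, |(q₁:ℝ)| ≤ 4 * Q → q₁ ∈ F₁ := by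
      intro q₁ h
      have habs : |q₁| ≤ N₁ := Int.le_floor.2 (by rw [Int.cast_abs]; exact h)
      rw [hF₁def, Finset.mem_Icc]
      exact ⟨(abs_le.1 habs).1, (abs_le.1 habs).2⟩
    have hsub : B ⊆ (⋃ q₀ ∈ F₀, S₁ q₀) ∪ (⋃ p ∈ F₀ ×ˢ F₁, S₂ p) := by
      rintro g ⟨hbox, q₀, q₁, q₂, hne, h0, h1, h2, hlt⟩
      have hgbox : g.1 ∈ Set.Ioc (1:ℝ) 4 ∧ g.2.1 ∈ Set.Ioc (1:ℝ) 4 ∧ g.2.2 ∈ Set.Ioc (1:ℝ) 4 :=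
        ⟨hbox.1, hbox.2.1, hbox.2.2⟩
      rcases eq_or_ne q₂ 0 with hq2 | hq2
      · rcases eq_or_ne q₁ 0 with hq1 | hq1
        · exfalso
          have hq0 : q₀ ≠ 0 := fun h => hne ⟨h, hq1, hq2⟩
          have h1abs : (1:ℝ) ≤ |(q₀:ℝ)| := by
            have : (1:ℤ) ≤ |q₀| := Int.one_le_abs hq0
            calc (1:ℝ) ≤ ((|q₀|:ℤ):ℝ) := by exact_mod_cast this
              _ = |(q₀:ℝ)| := Int.cast_abs
          rw [hq1, hq2] at hlt
          simp only [Int.cast_zero, mul_zero, add_zero] at hlt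
          have : |g.1 * (q₀:ℝ)| = g.1 * |(q₀:ℝ)| := by
            rw [abs_mul, abs_of_pos (lt_trans one_pos hgbox.1.1)]
          nlinarith [hgbox.1.1, hlt, this]
        · left
          refine Set.mem_iUnion₂.2 ⟨q₀, hmem₀ q₀ h0, hgbox, q₁, hq1, ?_⟩
          rw [hq2] at hlt
          simp only [Int.cast_zero, mul_zero, add_zero] at hlt
          exact hlt
      · right
        refine Set.mem_iUnion₂.2 ⟨(q₀, q₁), Finset.mem_product.2 ⟨hmem₀ q₀ h0, hmem₁ q₁ h1⟩,
          hgbox, q₂, hq2, hlt⟩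
    -- cardinalities
    have hcard₀ : ((F₀.card : ℕ) : ℝ) ≤ 4 * Q + 1 := by
      have h1 : (F₀.card : ℤ) = 2 * N₀ + 1 := by
        rw [hF₀def, Int.card_Icc]
        rw [Int.toNat_of_nonneg (by linarith)]
        ring
      have h2 : ((F₀.card : ℕ) : ℝ) = 2 * (N₀:ℝ) + 1 := by exact_mod_cast h1
      have h3 : (N₀:ℝ) ≤ 2 * Q := Int.floor_le _
      linarith
    have hcard₁ : ((F₁.card : ℕ) : ℝ) ≤ 8 * Q + 1 := by
      have h1 : (F₁.card : ℤ) = 2 * N₁ + 1 := by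
        rw [hF₁def, Int.card_Icc]
        rw [Int.toNat_of_nonneg (by linarith)]
        ring
      have h2 : ((F₁.card : ℕ) : ℝ) = 2 * (N₁:ℝ) + 1 := by exact_mod_cast h1
      have h3 : (N₁:ℝ) ≤ 4 * Q := Int.floor_le _
      linarith
    -- volume bounds per piece
    have hvol₁ : ∀ q₀ ∈ F₀, volume (S₁ q₀) ≤ ENNReal.ofReal (288 * βv / A1) :=
      fun q₀ _ => vol_slab_mid (q₀:ℝ) A1 βv hA1ge hβ0 hβ1
    have hvol₂ : ∀ p ∈ F₀ ×ˢ F₁, volume (S₂ p) ≤ ENNReal.ofReal (288 * βv / A2) :=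
      fun p _ => vol_slab_last (p.1:ℝ) A1 (p.2:ℝ) A2 βv hA2ge hβ0 hβ1
    -- rpow computations
    have key1 : Q * βv / A1 ≤ δ * P ^ (-ε / 2) := by
      have h1 : Q * βv / A1 = δ * P ^ ((α / 3 - ε) / 2 + -(2 - 4 * α / 3) / 2 - (α - 1) / 2) := by
        rw [Real.rpow_sub hP0, Real.rpow_add hP0, hQdef, hβdef, hA1def]
        ring
      rw [h1]
      apply mul_le_mul_of_nonneg_left _ hδ0.le
      exact rpow_le_rpow_of_exponent_le hP (by linarith)
    have key2 : Q * Q * βv / A2 ≤ δ * P ^ (-ε / 2) := by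
      have h1 : Q * Q * βv / A2
          = δ * P ^ ((α / 3 - ε) / 2 + (α / 3 - ε) / 2 + -(2 - 4 * α / 3) / 2 - (α - 1)) := by
        rw [Real.rpow_sub hP0, Real.rpow_add hP0, Real.rpow_add hP0, hQdef, hβdef, hA2def]
        ring
      rw [h1]
      apply mul_le_mul_of_nonneg_left _ hδ0.le
      exact rpow_le_rpow_of_exponent_le hP (by linarith)
    -- combine
    have step1 : volume B ≤ (∑ q₀ ∈ F₀, volume (S₁ q₀)) + ∑ p ∈ F₀ ×ˢ F₁, volume (S₂ p) := by
      refine le_trans (measure_mono hsub) (le_trans (measure_union_le _ _) ?_)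
      exact add_le_add (measure_biUnion_finset_le _ _) (measure_biUnion_finset_le _ _)
    have step2 : (∑ q₀ ∈ F₀, volume (S₁ q₀)) ≤ F₀.card • ENNReal.ofReal (288 * βv / A1) :=
      Finset.sum_le_card_nsmul _ _ _ hvol₁
    have step3 : (∑ p ∈ F₀ ×ˢ F₁, volume (S₂ p))
        ≤ (F₀ ×ˢ F₁).card • ENNReal.ofReal (288 * βv / A2) :=
      Finset.sum_le_card_nsmul _ _ _ hvol₂
    have hns1 : F₀.card • ENNReal.ofReal (288 * βv / A1)
        = ENNReal.ofReal ((F₀.card : ℝ) * (288 * βv / A1)) := by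
      rw [nsmul_eq_mul, ← ENNReal.ofReal_natCast F₀.card,
        ← ENNReal.ofReal_mul (Nat.cast_nonneg _)]
    have hns2 : (F₀ ×ˢ F₁).card • ENNReal.ofReal (288 * βv / A2)
        = ENNReal.ofReal (((F₀ ×ˢ F₁).card : ℝ) * (288 * βv / A2)) := by
      rw [nsmul_eq_mul, ← ENNReal.ofReal_natCast (F₀ ×ˢ F₁).card,
        ← ENNReal.ofReal_mul (Nat.cast_nonneg _)]
    have hr1 : (F₀.card : ℝ) * (288 * βv / A1) ≤ 2304 * (δ * P ^ (-ε / 2)) := by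
      have hβA1 : 0 ≤ 288 * βv / A1 := by positivity
      have hb : ((F₀.card : ℕ) : ℝ) ≤ 8 * Q := by linarith
      calc (F₀.card : ℝ) * (288 * βv / A1) ≤ (8 * Q) * (288 * βv / A1) :=
            mul_le_mul_of_nonneg_right hb hβA1
        _ = 2304 * (Q * βv / A1) := by ring
        _ ≤ 2304 * (δ * P ^ (-ε / 2)) := by linarith [key1]
    have hr2 : ((F₀ ×ˢ F₁).card : ℝ) * (288 * βv / A2) ≤ 27648 * (δ * P ^ (-ε / 2)) := by
      have hβA2 : 0 ≤ 288 * βv / A2 := by positivity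
      have hcprod : ((F₀ ×ˢ F₁).card : ℝ) = (F₀.card : ℝ) * (F₁.card : ℝ) := by
        rw [Finset.card_product]; push_cast; ring
      have hb0 : ((F₀.card : ℕ) : ℝ) ≤ 8 * Q := by linarith
      have hb1 : ((F₁.card : ℕ) : ℝ) ≤ 12 * Q := by linarith
      have hbb : ((F₀ ×ˢ F₁).card : ℝ) ≤ (8 * Q) * (12 * Q) := by
        rw [hcprod]
        exact mul_le_mul hb0 hb1 (Nat.cast_nonneg _) (by positivity)
      calc ((F₀ ×ˢ F₁).card : ℝ) * (288 * βv / A2) ≤ ((8 * Q) * (12 * Q)) * (288 * βv / A2) :=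
            mul_le_mul_of_nonneg_right hbb hβA2
        _ = 27648 * (Q * Q * βv / A2) := by ring
        _ ≤ 27648 * (δ * P ^ (-ε / 2)) := by linarith [key2]
    have hfin : volume B ≤ ENNReal.ofReal (2304 * (δ * P ^ (-ε / 2)))
        + ENNReal.ofReal (27648 * (δ * P ^ (-ε / 2))) := by
      refine le_trans step1 (add_le_add (le_trans step2 ?_) (le_trans step3 ?_))
      · rw [hns1]; exact ENNReal.ofReal_le_ofReal hr1
      · rw [hns2]; exact ENNReal.ofReal_le_ofReal hr2
    refine le_trans hfin ?_
    rw [← ENNReal.ofReal_add (by positivity) (by positivity)]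
    apply ENNReal.ofReal_le_ofReal
    have hpos : (0:ℝ) ≤ δ * P ^ (-ε / 2) := by positivity
    nlinarith
end

section
/- Fix α with 1 ≤ α ≤ 3/2, constants ε > 0, δ ∈ (0, 1], and γ ∈ (0, 1/(4√2)]. For P > 1 let Q = P^{(α/3−ε)/2}. Given channel coefficients (h₁₁, h₁₂, h₂₁, h₂₂) ∈ (1,2]⁴, let v₁c, v₂c, u₁, u₂ be independent random variables each uniformly distributed on Ω(2γ/Q, Q), mutually independent and independent of z₁ distributed as the Gaussian measure N(0, 1), and define y₁ = √(P^{2−α})·h₁₁h₂₂·v₁c + √P·h₁₂h₁₁·(v₂c + u₁) + √(P^{α})·h₁₂h₂₁·u₂ + z₁. Then for every η > 0 there exists P₀ such that for every P ≥ P₀ for which P^{(α−1)/2} is a positive integer, there exists a measurable outage set H̄₀ ⊆ (1,2]⁴ of four-dimensional Lebesgue measure at most 258048·δ·P^{−ε/2} such that for every (h₁₁, h₁₂, h₂₁, h₂₂) ∈ (1,2]⁴ \ H̄₀ there is a Borel-measurable function f : ℝ → ℝ with ℙ[ f(y₁) = v₁c ] > 1 − η. -/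
open MeasureTheory ProbabilityTheory Real Filter
open scoped ENNReal

/-- The PAM constellation `Ω(ξ, Q) = { ξ·a : a ∈ ℤ, −Q ≤ a ≤ Q }`. -/
def PAM (ξ Q : ℝ) : Set ℝ :=
  {x | ∃ a : ℤ, x = ξ * a ∧ -Q ≤ (a : ℝ) ∧ (a : ℝ) ≤ Q}

/-- The hypercube `(1,2]⁴ ⊆ ℝ⁴`. -/
def channelCube : Set (ℝ × ℝ × ℝ × ℝ) :=
  (Set.Ioc 1 2) ×ˢ (Set.Ioc 1 2) ×ˢ (Set.Ioc 1 2) ×ˢ (Set.Ioc 1 2)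



lemma PAM_finite (ξ Q : ℝ) : (PAM ξ Q).Finite := by
  have h : PAM ξ Q ⊆ (fun a : ℤ => ξ * a) '' (Set.Icc ⌈-Q⌉ ⌊Q⌋) := by
    rintro x ⟨a, rfl, h1, h2⟩
    exact ⟨a, ⟨Int.ceil_le.mpr (by exact_mod_cast h1), Int.le_floor.mpr h2⟩, rfl⟩
  exact ((Set.finite_Icc _ _).image _).subset h

lemma PAM_zero_mem (ξ Q : ℝ) (hQ : 0 ≤ Q) : (0:ℝ) ∈ PAM ξ Q :=
  ⟨0, by simp, by simpa using hQ, by simpa using hQ⟩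

lemma PAM_measurable (ξ Q : ℝ) : MeasurableSet (PAM ξ Q) :=
  (PAM_finite ξ Q).measurableSet

lemma lin_slice (a b κ B : ℝ) (hB : 0 < B) (hb : B ≤ |b|) :
    volume {x : ℝ | x ∈ Set.Ioc (1:ℝ) 2 ∧ |a + b*x| < κ} ≤ ENNReal.ofReal (2*κ/B) := by
  rcases le_or_gt κ 0 with hκ | hκ
  · have : {x : ℝ | x ∈ Set.Ioc (1:ℝ) 2 ∧ |a + b*x| < κ} = ∅ := by
      ext x; simp only [Set.mem_setOf_eq, Set.mem_empty_iff_false, iff_false, not_and]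
      intro _ h; exact absurd (lt_of_lt_of_le h hκ) (not_lt.mpr (abs_nonneg _))
    rw [this]; simp
  have hbne : b ≠ 0 := by intro h; rw [h] at hb; simp at hb; linarith
  have key : ∀ (a' b' : ℝ), 0 < b' → B ≤ b' →
      volume {x : ℝ | |a' + b'*x| < κ} ≤ ENNReal.ofReal (2*κ/B) := by
    intro a' b' hb' hBb'
    have hset : {x : ℝ | |a' + b'*x| < κ} = Set.Ioo ((-κ - a')/b') ((κ - a')/b') := by
      ext x
      simp only [Set.mem_setOf_eq, Set.mem_Ioo, abs_lt, div_lt_iff₀ hb', lt_div_iff₀ hb']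
      constructor <;> intro h <;> constructor <;> linarith [h.1, h.2]
    rw [hset, Real.volume_Ioo]
    apply ENNReal.ofReal_le_ofReal
    have : (κ - a')/b' - (-κ - a')/b' = 2*κ/b' := by field_simp; ring
    rw [this]
    exact div_le_div_of_nonneg_left (by linarith) hB hBb'
  rcases lt_or_gt_of_ne hbne with hneg | hpos
  · have := key (-a) (-b) (by linarith) (by rwa [abs_of_neg hneg] at hb)
    refine le_trans (measure_mono ?_) this
    intro x hx
    simp only [Set.mem_setOf_eq]
    have h2 : -a + -b*x = -(a + b*x) := by ring
    rw [h2, abs_neg]; exact hx.2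
  · have hsub : {x : ℝ | x ∈ Set.Ioc (1:ℝ) 2 ∧ |a + b*x| < κ} ⊆ {x : ℝ | |a + b*x| < κ} :=
      fun x hx => hx.2
    refine le_trans (measure_mono hsub) (key a b hpos ?_)
    rwa [abs_of_pos hpos] at hb


lemma lintegral_indicator_Ioc_le {f : ℝ → ℝ≥0∞} {c : ℝ≥0∞}
    (h : ∀ x, f x ≤ Set.indicator (Set.Ioc (1:ℝ) 2) (fun _ => c) x) :
    ∫⁻ x, f x ≤ c := by
  calc ∫⁻ x, f x ≤ ∫⁻ x, Set.indicator (Set.Ioc (1:ℝ) 2) (fun _ => c) x := lintegral_mono h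
  _ = c * volume (Set.Ioc (1:ℝ) 2) := lintegral_indicator_const measurableSet_Ioc c
  _ = c := by rw [Real.volume_Ioc]; norm_num

lemma vol4_third (S : Set (ℝ × ℝ × ℝ × ℝ)) (hm : MeasurableSet S) (hsub : S ⊆ channelCube)
    {c : ℝ≥0∞}
    (hslice : ∀ x y w : ℝ, x ∈ Set.Ioc (1:ℝ) 2 → y ∈ Set.Ioc (1:ℝ) 2 → w ∈ Set.Ioc (1:ℝ) 2 →
      volume {z : ℝ | (x, y, z, w) ∈ S} ≤ c) :
    volume S ≤ c := by
  have h4 : (volume : Measure (ℝ × ℝ × ℝ × ℝ))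
      = (volume : Measure ℝ).prod (volume : Measure (ℝ × ℝ × ℝ)) := Measure.volume_eq_prod ℝ _
  have h3 : (volume : Measure (ℝ × ℝ × ℝ))
      = (volume : Measure ℝ).prod (volume : Measure (ℝ × ℝ)) := Measure.volume_eq_prod ℝ _
  have h2 : (volume : Measure (ℝ × ℝ))
      = (volume : Measure ℝ).prod (volume : Measure ℝ) := Measure.volume_eq_prod ℝ ℝ
  rw [h4, Measure.prod_apply hm]
  apply lintegral_indicator_Ioc_le
  intro x
  rcases Classical.em (x ∈ Set.Ioc (1:ℝ) 2) with hx | hx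
  · rw [Set.indicator_of_mem hx]
    have hmx : MeasurableSet (Prod.mk x ⁻¹' S) := hm.preimage measurable_prodMk_left
    rw [h3, Measure.prod_apply hmx]
    apply lintegral_indicator_Ioc_le
    intro y
    rcases Classical.em (y ∈ Set.Ioc (1:ℝ) 2) with hy | hy
    · rw [Set.indicator_of_mem hy]
      have hmxy : MeasurableSet (Prod.mk y ⁻¹' (Prod.mk x ⁻¹' S)) :=
        hmx.preimage measurable_prodMk_left
      rw [h2, Measure.prod_apply_symm hmxy]
      apply lintegral_indicator_Ioc_le
      intro w
      rcases Classical.em (w ∈ Set.Ioc (1:ℝ) 2) with hw | hw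
      · rw [Set.indicator_of_mem hw]
        exact hslice x y w hx hy hw
      · rw [Set.indicator_of_notMem hw]
        have : ((fun z => (z, w)) ⁻¹' (Prod.mk y ⁻¹' (Prod.mk x ⁻¹' S))) = ∅ := by
          ext z; simp only [Set.mem_preimage, Set.mem_empty_iff_false, iff_false]
          intro hmem
          exact hw (hsub hmem).2.2.2
        rw [this]; simp
    · rw [Set.indicator_of_notMem hy]
      have : (Prod.mk y ⁻¹' (Prod.mk x ⁻¹' S)) = ∅ := by
        ext zw; simp only [Set.mem_preimage, Set.mem_empty_iff_false, iff_false]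
        intro hmem
        exact hy (hsub hmem).2.1
      rw [this]; simp
  · rw [Set.indicator_of_notMem hx]
    have : (Prod.mk x ⁻¹' S) = ∅ := by
      ext yzw; simp only [Set.mem_preimage, Set.mem_empty_iff_false, iff_false]
      intro hmem
      exact hx (hsub hmem).1
    rw [this]; simp

lemma vol4_second (S : Set (ℝ × ℝ × ℝ × ℝ)) (hm : MeasurableSet S) (hsub : S ⊆ channelCube)
    {c : ℝ≥0∞}
    (hslice : ∀ x z w : ℝ, x ∈ Set.Ioc (1:ℝ) 2 → z ∈ Set.Ioc (1:ℝ) 2 → w ∈ Set.Ioc (1:ℝ) 2 →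
      volume {y : ℝ | (x, y, z, w) ∈ S} ≤ c) :
    volume S ≤ c := by
  have h4 : (volume : Measure (ℝ × ℝ × ℝ × ℝ))
      = (volume : Measure ℝ).prod (volume : Measure (ℝ × ℝ × ℝ)) := Measure.volume_eq_prod ℝ _
  have h3 : (volume : Measure (ℝ × ℝ × ℝ))
      = (volume : Measure ℝ).prod (volume : Measure (ℝ × ℝ)) := Measure.volume_eq_prod ℝ _
  have h2 : (volume : Measure (ℝ × ℝ))
      = (volume : Measure ℝ).prod (volume : Measure ℝ) := Measure.volume_eq_prod ℝ ℝ
  rw [h4, Measure.prod_apply hm]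
  apply lintegral_indicator_Ioc_le
  intro x
  rcases Classical.em (x ∈ Set.Ioc (1:ℝ) 2) with hx | hx
  · rw [Set.indicator_of_mem hx]
    have hmx : MeasurableSet (Prod.mk x ⁻¹' S) := hm.preimage measurable_prodMk_left
    rw [h3, Measure.prod_apply_symm hmx]
    -- integrate over zw : ℝ × ℝ, slice in y
    have hIoc2 : volume ((Set.Ioc (1:ℝ) 2) ×ˢ (Set.Ioc (1:ℝ) 2)) = 1 := by
      rw [h2, Measure.prod_prod, Real.volume_Ioc]
      norm_num
    calc ∫⁻ zw : ℝ × ℝ, volume ((fun y => (y, zw)) ⁻¹' (Prod.mk x ⁻¹' S))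
        ≤ ∫⁻ zw : ℝ × ℝ, Set.indicator ((Set.Ioc (1:ℝ) 2) ×ˢ (Set.Ioc (1:ℝ) 2))
            (fun _ => c) zw := by
          apply lintegral_mono
          intro zw
          rcases Classical.em (zw ∈ (Set.Ioc (1:ℝ) 2) ×ˢ (Set.Ioc (1:ℝ) 2)) with hzw | hzw
          · rw [Set.indicator_of_mem hzw]
            have := hslice x zw.1 zw.2 hx hzw.1 hzw.2
            refine le_trans (le_of_eq ?_) this
            congr 1
          · rw [Set.indicator_of_notMem hzw]
            have : ((fun y => (y, zw)) ⁻¹' (Prod.mk x ⁻¹' S)) = ∅ := by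
              ext y; simp only [Set.mem_preimage, Set.mem_empty_iff_false, iff_false]
              intro hmem
              exact hzw ⟨(hsub hmem).2.2.1, (hsub hmem).2.2.2⟩
            simp only [this]; simp
      _ = c * volume ((Set.Ioc (1:ℝ) 2) ×ˢ (Set.Ioc (1:ℝ) 2)) :=
          lintegral_indicator_const (measurableSet_Ioc.prod measurableSet_Ioc) c
      _ = c := by rw [hIoc2, mul_one]
  · rw [Set.indicator_of_notMem hx]
    have : (Prod.mk x ⁻¹' S) = ∅ := by
      ext yzw; simp only [Set.mem_preimage, Set.mem_empty_iff_false, iff_false]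
      intro hmem
      exact hx (hsub hmem).1
    rw [this]; simp


lemma harmonic_int (n : ℕ) (hn : 1 ≤ n) :
    ∑ d ∈ Finset.Icc (-(n:ℤ)) n, (|(d:ℝ)|)⁻¹ ≤ 2*(1 + Real.log n) := by
  induction n, hn using Nat.le_induction with
  | base =>
    have h : Finset.Icc (-((1:ℕ):ℤ)) ((1:ℕ):ℤ) = {-1, 0, 1} := by decide
    rw [h]
    norm_num
  | succ n hn ih =>
    have hins : Finset.Icc (-((n+1:ℕ)):ℤ) ((n+1:ℕ))
        = insert (-((n+1:ℕ)):ℤ) (insert ((n+1:ℕ):ℤ) (Finset.Icc (-(n:ℤ)) n)) := by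
      ext a
      simp only [Finset.mem_Icc, Finset.mem_insert]
      push_cast
      omega
    have h1 : (-((n+1:ℕ)):ℤ) ∉ insert ((n+1:ℕ):ℤ) (Finset.Icc (-(n:ℤ)) n) := by
      simp only [Finset.mem_insert, Finset.mem_Icc]
      push_cast
      omega
    have h2 : ((n+1:ℕ):ℤ) ∉ Finset.Icc (-(n:ℤ)) n := by
      simp only [Finset.mem_Icc]
      push_cast
      omega
    rw [hins, Finset.sum_insert h1, Finset.sum_insert h2]
    have hterm : (|((-((n+1:ℕ)):ℤ):ℝ)|)⁻¹ = ((n:ℝ)+1)⁻¹ := by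
      push_cast
      rw [abs_neg, abs_of_pos (by positivity)]
    have hterm2 : (|(((n+1:ℕ):ℤ):ℝ)|)⁻¹ = ((n:ℝ)+1)⁻¹ := by
      push_cast
      rw [abs_of_pos (by positivity)]
    rw [hterm, hterm2]
    have hlog : ((n:ℝ)+1)⁻¹ ≤ Real.log ((n:ℕ)+1) - Real.log n := by
      have hn0 : (0:ℝ) < n := by exact_mod_cast hn
      have hx : (0:ℝ) < (n:ℝ)/((n:ℝ)+1) := by positivity
      have := Real.log_le_sub_one_of_pos hx
      rw [Real.log_div (by positivity) (by positivity)] at this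
      have heq : (n:ℝ)/((n:ℝ)+1) - 1 = -((n:ℝ)+1)⁻¹ := by field_simp; ring
      rw [heq] at this
      push_cast
      linarith
    push_cast at ih hlog ⊢
    linarith

lemma gauss_T (η : ℝ) (hη : 0 < η) :
    ∃ T : ℝ, 1 ≤ T ∧ ENNReal.ofReal (1-η) < gaussianReal 0 1 (Set.Ioo (-T) T) := by
  have hmono : Monotone (fun n : ℕ => Set.Ioo (-(n:ℝ)) n) := by
    intro a b hab
    apply Set.Ioo_subset_Ioo <;> · simp; exact_mod_cast hab
  have hunion : (⋃ n : ℕ, Set.Ioo (-(n:ℝ)) n) = Set.univ := by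
    ext x
    simp only [Set.mem_iUnion, Set.mem_Ioo, Set.mem_univ, iff_true]
    obtain ⟨n, hn⟩ := exists_nat_gt |x| 
    exact ⟨n, by cases abs_lt.mp hn; constructor <;> linarith⟩
  have htend := tendsto_measure_iUnion_atTop (μ := gaussianReal 0 1) hmono
  rw [hunion, measure_univ] at htend
  have hlt : ENNReal.ofReal (1-η) < 1 := by
    apply ENNReal.ofReal_lt_one.mpr
    linarith
  obtain ⟨n, hn⟩ := (htend.eventually_const_lt hlt).exists
  refine ⟨max n 1, le_max_right _ _, lt_of_lt_of_le hn (measure_mono ?_)⟩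
  apply Set.Ioo_subset_Ioo
  · simp only [neg_le_neg_iff]
    exact le_max_left _ _
  · exact le_max_left _ _


set_option maxHeartbeats 4000000 in
/-- In the regime `1 ≤ α ≤ 3/2`, for all channel coefficients outside an outage set of
vanishing Lebesgue measure, `v₁c` can be decoded from `y₁` with error probability
tending to `0` as `P → ∞`. -/
theorem decoding_with_outage_regime_one_three_halves
    (α ε δ γ : ℝ)
    (hα₁ : 1 ≤ α) (hα₂ : α ≤ 3 / 2) (hε : 0 < ε)
    (hδ : δ ∈ Set.Ioc (0 : ℝ) 1)
    (hγ₁ : 0 < γ) (hγ₂ : γ ≤ 1 / (4 * Real.sqrt 2)) :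
    ∀ η > (0 : ℝ), ∃ P₀ > (1 : ℝ), ∀ P ≥ P₀,
      (∃ n : ℕ, 0 < n ∧ P ^ ((α - 1) / 2) = (n : ℝ)) →
      ∃ H₀ : Set (ℝ × ℝ × ℝ × ℝ), MeasurableSet H₀ ∧ H₀ ⊆ channelCube ∧
        volume H₀ ≤ ENNReal.ofReal (258048 * δ * P ^ (-ε / 2)) ∧
        ∀ h₁₁ h₁₂ h₂₁ h₂₂ : ℝ, (h₁₁, h₁₂, h₂₁, h₂₂) ∈ channelCube \ H₀ →
          ∀ (Ω : Type) (_ : MeasurableSpace Ω) (μ : Measure Ω) (_ : IsProbabilityMeasure μ)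
            (v₁c v₂c u₁ u₂ z₁ : Ω → ℝ),
            Measurable v₁c → Measurable v₂c → Measurable u₁ → Measurable u₂ →
            Measurable z₁ →
            Measure.map v₁c μ
              = uniformOn (PAM (2 * γ / P ^ ((α / 3 - ε) / 2)) (P ^ ((α / 3 - ε) / 2))) →
            Measure.map v₂c μ
              = uniformOn (PAM (2 * γ / P ^ ((α / 3 - ε) / 2)) (P ^ ((α / 3 - ε) / 2))) →
            Measure.map u₁ μ
              = uniformOn (PAM (2 * γ / P ^ ((α / 3 - ε) / 2)) (P ^ ((α / 3 - ε) / 2))) →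
            Measure.map u₂ μ
              = uniformOn (PAM (2 * γ / P ^ ((α / 3 - ε) / 2)) (P ^ ((α / 3 - ε) / 2))) →
            Measure.map z₁ μ = gaussianReal 0 1 →
            iIndepFun
              ![v₁c, v₂c, u₁, u₂, z₁] μ →
            ∃ f : ℝ → ℝ, Measurable f ∧
              μ {ω | f (Real.sqrt (P ^ (2 - α)) * (h₁₁ * h₂₂) * v₁c ω
                        + Real.sqrt P * (h₁₂ * h₁₁) * (v₂c ω + u₁ ω)
                        + Real.sqrt (P ^ α) * (h₁₂ * h₂₁) * u₂ ω + z₁ ω)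
                      = v₁c ω}
                > ENNReal.ofReal (1 - η) := by
  intro η hη
  have hδ0 : 0 < δ := hδ.1
  rcases lt_or_ge ((α / 3 - ε) / 2) 0 with he | he
  · -- trivial branch: PAM = {0}
    refine ⟨2, by norm_num, ?_⟩
    intro P hP _
    have hP1 : 1 < P := by linarith
    have hQlt : P ^ ((α / 3 - ε) / 2) < 1 := Real.rpow_lt_one_of_one_lt_of_neg hP1 he
    refine ⟨∅, MeasurableSet.empty, Set.empty_subset _, by simp, ?_⟩
    intro h₁₁ h₁₂ h₂₁ h₂₂ _ Ω mΩ μ hprob v₁c v₂c u₁ u₂ z₁ hv₁ _ _ _ _ hmap₁ _ _ _ _ _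
    refine ⟨fun _ => 0, measurable_const, ?_⟩
    have hPAM0 : ∀ x ∈ PAM (2 * γ / P ^ ((α / 3 - ε) / 2)) (P ^ ((α / 3 - ε) / 2)), x = 0 := by
      rintro x ⟨a, rfl, h1, h2⟩
      have h3 : (a:ℝ) < 1 := lt_of_le_of_lt h2 hQlt
      have h4 : (-1:ℝ) < (a:ℝ) := by
        have : -(P ^ ((α / 3 - ε) / 2)) > -1 := by linarith
        linarith
      have h5 : a < 1 := by exact_mod_cast h3
      have h6 : -1 < a := by exact_mod_cast h4
      have : a = 0 := by omega
      simp [this]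
    have hsub : v₁c ⁻¹' (PAM (2 * γ / P ^ ((α / 3 - ε) / 2)) (P ^ ((α / 3 - ε) / 2)))
        ⊆ {ω | (0:ℝ) = v₁c ω} := by
      intro ω hω
      exact (hPAM0 _ hω).symm
    have h1 : μ (v₁c ⁻¹' (PAM (2 * γ / P ^ ((α / 3 - ε) / 2)) (P ^ ((α / 3 - ε) / 2)))) = 1 := by
      rw [← Measure.map_apply hv₁ (PAM_measurable _ _), hmap₁]
      exact uniformOn_self (PAM_finite _ _) ⟨0, PAM_zero_mem _ _ (by positivity)⟩
    calc ENNReal.ofReal (1 - η) < 1 := ENNReal.ofReal_lt_one.mpr (by linarith)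
      _ = _ := h1.symm
      _ ≤ _ := measure_mono hsub
  · -- main branch
    obtain ⟨T, hT1, hTg⟩ := gauss_T η hη
    have hTpos : (0:ℝ) < T := by linarith
    have hε2 : (0:ℝ) < ε/2 := by linarith
    have t1 : Tendsto (fun x : ℝ => Real.log x * x ^ (-(ε/2))) atTop (nhds 0) := by
      apply (isLittleO_log_rpow_atTop hε2).tendsto_div_nhds_zero.congr'
      filter_upwards [eventually_gt_atTop (0:ℝ)] with x hx
      rw [Real.rpow_neg hx.le, div_eq_mul_inv]
    have t2 : Tendsto (fun x : ℝ => 3 * x ^ (-(ε/2))) atTop (nhds 0) := by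
      simpa using (tendsto_rpow_neg_atTop hε2).const_mul (3:ℝ)
    have htend2 : Tendsto (fun x : ℝ => (3 + Real.log x) * x ^ (-(ε/2))) atTop (nhds 0) := by
      have h := t2.add t1
      simp only [add_zero] at h
      exact h.congr (fun x => by ring)
    have hev1 : ∀ᶠ P : ℝ in atTop, T/γ ≤ P ^ (ε/2) :=
      (tendsto_rpow_atTop hε2).eventually_ge_atTop _
    have hconst : (0:ℝ) < 258048*δ := mul_pos (by norm_num) hδ0
    have hev2 : ∀ᶠ P : ℝ in atTop,
        200*(T/γ)*((3 + Real.log P) * P ^ (-(ε/2))) ≤ 258048*δ := by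
      have h := (htend2.const_mul (200*(T/γ))).eventually_lt_const (by simpa using hconst : (200*(T/γ)) * 0 < 258048*δ)
      filter_upwards [h] with x hx
      exact le_of_lt hx
    obtain ⟨P₀', hP₀'⟩ := eventually_atTop.mp (hev1.and hev2)
    refine ⟨max P₀' 2, lt_of_lt_of_le (by norm_num) (le_max_right _ _), ?_⟩
    intro P hP _
    have hP2 : (2:ℝ) ≤ P := le_trans (le_max_right _ _) hP
    have hP1 : (1:ℝ) < P := by linarith
    have hP0 : (0:ℝ) < P := by linarith
    obtain ⟨hC2, hC3⟩ := hP₀' P (le_trans (le_max_left _ _) hP)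
    obtain ⟨Q, hQdef⟩ : ∃ q : ℝ, q = P ^ ((α / 3 - ε) / 2) := ⟨_, rfl⟩
    rw [← hQdef]
    obtain ⟨ξ, hξdef⟩ : ∃ x : ℝ, x = 2 * γ / Q := ⟨_, rfl⟩
    rw [← hξdef]
    have hQ1 : 1 ≤ Q := by rw [hQdef]; exact Real.one_le_rpow hP1.le he
    have hQpos : (0:ℝ) < Q := by linarith
    have hξpos : 0 < ξ := by
      rw [hξdef]; exact div_pos (by linarith) hQpos
    obtain ⟨m, hmdef⟩ : ∃ k : ℤ, k = ⌊Q⌋ := ⟨_, rfl⟩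
    have hm1 : 1 ≤ m := by
      rw [hmdef, Int.le_floor]; exact_mod_cast hQ1
    have hM1 : (1:ℝ) ≤ (m:ℝ) := by exact_mod_cast hm1
    have hMQ : (m:ℝ) ≤ Q := by rw [hmdef]; exact Int.floor_le Q
    obtain ⟨κ, hκdef⟩ : ∃ k : ℝ, k = T * Q / γ := ⟨_, rfl⟩
    have hκpos : 0 < κ := by rw [hκdef]; exact div_pos (mul_pos hTpos hQpos) hγ₁
    have hsA : Real.sqrt (P ^ (2 - α)) = P ^ ((2 - α)/2) := by
      rw [Real.sqrt_eq_rpow, ← Real.rpow_mul hP0.le]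
      ring_nf
    have hsB : Real.sqrt P = P ^ ((1:ℝ)/2) := Real.sqrt_eq_rpow P
    have hsC : Real.sqrt (P ^ α) = P ^ (α/2) := by
      rw [Real.sqrt_eq_rpow, ← Real.rpow_mul hP0.le]
      ring_nf
    have hκle : κ ≤ P ^ ((2-α)/2) := by
      have h1 : κ = (T/γ)*Q := by rw [hκdef]; ring
      have h2 : (T/γ)*Q ≤ P^(ε/2) * Q := mul_le_mul_of_nonneg_right hC2 hQpos.le
      have h3 : P^(ε/2) * Q = P^(ε/2 + (α/3-ε)/2) := by
        rw [hQdef, ← Real.rpow_add hP0]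
      have h4 : P^(ε/2 + (α/3-ε)/2) ≤ P^((2-α)/2) :=
        Real.rpow_le_rpow_of_exponent_le hP1.le (by linarith)
      linarith
    obtain ⟨L, hLdef⟩ : ∃ L : ℤ×ℤ×ℤ → ℝ×ℝ×ℝ×ℝ → ℝ, L = fun Δ h =>
      Real.sqrt (P ^ (2-α)) * (h.1 * h.2.2.2) * Δ.1 + Real.sqrt P * (h.2.1 * h.1) * Δ.2.1
        + Real.sqrt (P ^ α) * (h.2.1 * h.2.2.1) * Δ.2.2 := ⟨_, rfl⟩
    have hLmeas : ∀ Δ, Measurable (L Δ) := by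
      intro Δ
      rw [hLdef]
      fun_prop
    obtain ⟨Bad, hBaddef⟩ : ∃ B : ℤ×ℤ×ℤ → Set (ℝ×ℝ×ℝ×ℝ), B = fun Δ =>
      if Δ.1 = 0 then ∅ else channelCube ∩ {h | |L Δ h| < κ} := ⟨_, rfl⟩
    have hcubeMeas : MeasurableSet channelCube :=
      measurableSet_Ioc.prod (measurableSet_Ioc.prod (measurableSet_Ioc.prod measurableSet_Ioc))
    have hBadMeas : ∀ Δ, MeasurableSet (Bad Δ) := by
      intro Δ
      rw [hBaddef]
      dsimp only
      split_ifs
      · exact MeasurableSet.empty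
      · exact hcubeMeas.inter (measurableSet_lt (hLmeas Δ).abs measurable_const)
    have hBadSub : ∀ Δ, Bad Δ ⊆ channelCube := by
      intro Δ
      rw [hBaddef]
      dsimp only
      split_ifs
      · exact Set.empty_subset _
      · exact Set.inter_subset_left
    obtain ⟨I₁, hI₁def⟩ : ∃ I : Finset ℤ, I = Finset.Icc (-(2*m)) (2*m) := ⟨_, rfl⟩
    obtain ⟨I₂, hI₂def⟩ : ∃ I : Finset ℤ, I = Finset.Icc (-(4*m)) (4*m) := ⟨_, rfl⟩
    obtain ⟨D, hDdef⟩ : ∃ Df : Finset (ℤ×ℤ×ℤ), Df = I₁ ×ˢ (I₂ ×ˢ I₁) := ⟨_, rfl⟩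
    refine ⟨⋃ Δ ∈ D, Bad Δ, MeasurableSet.biUnion D.countable_toSet (fun Δ _ => hBadMeas Δ),
      Set.iUnion₂_subset fun Δ _ => hBadSub Δ, ?_, ?_⟩
    · -- volume bound
      obtain ⟨Pa, hPadef⟩ : ∃ x : ℝ, x = P ^ (-(α/2)) := ⟨_, rfl⟩
      obtain ⟨Pb, hPbdef⟩ : ∃ x : ℝ, x = P ^ (-((1:ℝ)/2)) := ⟨_, rfl⟩
      obtain ⟨r, hrdef⟩ : ∃ f : ℤ×ℤ×ℤ → ℝ, f = fun Δ =>
        2*κ*Pa * (|((Δ.2.2 : ℤ):ℝ)|)⁻¹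
          + (if Δ.2.2 = 0 then 2*κ*Pb * (|((Δ.2.1 : ℤ):ℝ)|)⁻¹ else 0) := ⟨_, rfl⟩
      have hPa0 : 0 ≤ Pa := by rw [hPadef]; exact Real.rpow_nonneg hP0.le _
      have hPb0 : 0 ≤ Pb := by rw [hPbdef]; exact Real.rpow_nonneg hP0.le _
      have hrnonneg : ∀ Δ : ℤ×ℤ×ℤ, 0 ≤ r Δ := by
        intro Δ
        simp only [hrdef]
        have h1 : 0 ≤ 2*κ*Pa * (|((Δ.2.2 : ℤ):ℝ)|)⁻¹ :=
          mul_nonneg (mul_nonneg (by linarith) hPa0) (by positivity)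
        have h2 : 0 ≤ (if Δ.2.2 = 0 then 2*κ*Pb * (|((Δ.2.1 : ℤ):ℝ)|)⁻¹ else 0) := by
          split_ifs
          · exact mul_nonneg (mul_nonneg (by linarith) hPb0) (by positivity)
          · exact le_refl 0
        linarith
      have hBadBound : ∀ Δ : ℤ×ℤ×ℤ, volume (Bad Δ) ≤ ENNReal.ofReal (r Δ) := by
        rintro ⟨a, s, d⟩
        by_cases ha : a = 0
        · have : Bad (a, s, d) = ∅ := by simp only [hBaddef]; rw [if_pos ha]
          rw [this, measure_empty]
          exact zero_le
        · by_cases hd : d = 0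
          · by_cases hs : s = 0
            · -- empty by hκle
              have hempty : Bad (a, s, d) = ∅ := by
                simp only [hBaddef]
                rw [if_neg ha]
                ext h
                simp only [Set.mem_inter_iff, Set.mem_setOf_eq, Set.mem_empty_iff_false,
                  iff_false, not_and]
                intro hcube habs
                obtain ⟨hx1, hx2, hx3, hx4⟩ := hcube
                have ha1 : (1:ℝ) ≤ |((a : ℤ):ℝ)| := by
                  rw [← Int.cast_abs]
                  exact_mod_cast Int.one_le_abs ha
                have hL : L (a, s, d) h = Real.sqrt (P ^ (2-α)) * (h.1 * h.2.2.2) * a := by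
                  simp only [hLdef, hd, hs]
                  push_cast
                  ring
                have hPpos : (0:ℝ) < P ^ ((2-α)/2) := Real.rpow_pos_of_pos hP0 _
                have habs2 : |L (a, s, d) h| = P ^ ((2-α)/2) * (h.1 * h.2.2.2) * |((a : ℤ):ℝ)| := by
                  rw [hL, hsA, abs_mul, abs_mul, abs_of_pos hPpos,
                    abs_of_pos (by nlinarith [hx1.1, hx4.1] : (0:ℝ) < h.1 * h.2.2.2)]
                rw [habs2] at habs
                have h14 : (1:ℝ) ≤ h.1 * h.2.2.2 := by nlinarith [hx1.1, hx4.1]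
                have hga : (1:ℝ) ≤ (h.1 * h.2.2.2) * |((a : ℤ):ℝ)| := by nlinarith
                have hfin : P ^ ((2-α)/2) * 1 ≤ P ^ ((2-α)/2) * ((h.1 * h.2.2.2) * |((a : ℤ):ℝ)|) :=
                  mul_le_mul_of_nonneg_left hga hPpos.le
                rw [mul_one, ← mul_assoc] at hfin
                linarith
              rw [hempty, measure_empty]
              exact zero_le
            · -- slice in second coordinate
              subst hd
              have hs1 : (1:ℝ) ≤ |((s : ℤ):ℝ)| := by
                rw [← Int.cast_abs]; exact_mod_cast Int.one_le_abs hs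
              have hPb' : (0:ℝ) < P ^ ((1:ℝ)/2) := Real.rpow_pos_of_pos hP0 _
              have hB0pos : (0:ℝ) < P ^ ((1:ℝ)/2) * |((s : ℤ):ℝ)| := by nlinarith
              have key := vol4_second (Bad (a, s, 0)) (hBadMeas _) (hBadSub _)
                (c := ENNReal.ofReal (2*κ/(P ^ ((1:ℝ)/2) * |((s : ℤ):ℝ)|))) ?_
              · refine le_trans key (ENNReal.ofReal_le_ofReal ?_)
                have hrval : r (a, s, 0) = 2*κ*Pb * (|((s : ℤ):ℝ)|)⁻¹ := by
                  simp only [hrdef]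
                  norm_num
                have heq : 2*κ/(P ^ ((1:ℝ)/2) * |((s : ℤ):ℝ)|)
                    = 2*κ*Pb * (|((s : ℤ):ℝ)|)⁻¹ := by
                  rw [hPbdef, Real.rpow_neg hP0.le, div_eq_mul_inv, mul_inv]
                  ring
                rw [hrval, heq]
              · intro x z w hx hz hw
                refine le_trans (measure_mono ?_)
                  (lin_slice (Real.sqrt (P ^ (2-α)) * (x*w) * a) (Real.sqrt P * x * s) κ
                    (P ^ ((1:ℝ)/2) * |((s : ℤ):ℝ)|) hB0pos ?_)
                · intro y hy
                  simp only [hBaddef, Set.mem_setOf_eq] at hy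
                  rw [if_neg ha] at hy
                  obtain ⟨hcube, habs⟩ := hy
                  refine ⟨hcube.2.1, ?_⟩
                  have heq : Real.sqrt (P ^ (2-α)) * (x*w) * a + Real.sqrt P * x * s * y
                      = L (a, s, 0) (x, y, z, w) := by
                    simp only [hLdef]
                    push_cast
                    ring
                  rw [heq]
                  exact habs
                · rw [abs_mul, abs_mul, hsB, abs_of_pos hPb',
                    abs_of_pos (by linarith [hx.1] : (0:ℝ) < x)]
                  have : P ^ ((1:ℝ)/2) * |((s : ℤ):ℝ)| ≤ P ^ ((1:ℝ)/2) * x * |((s : ℤ):ℝ)| := by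
                    nlinarith [hx.1, abs_nonneg ((s:ℤ):ℝ)]
                  linarith
          · -- slice in third coordinate
            have hd1 : (1:ℝ) ≤ |((d : ℤ):ℝ)| := by
              rw [← Int.cast_abs]; exact_mod_cast Int.one_le_abs hd
            have hPa' : (0:ℝ) < P ^ (α/2) := Real.rpow_pos_of_pos hP0 _
            have hB0pos : (0:ℝ) < P ^ (α/2) * |((d : ℤ):ℝ)| := by nlinarith
            have key := vol4_third (Bad (a, s, d)) (hBadMeas _) (hBadSub _)
              (c := ENNReal.ofReal (2*κ/(P ^ (α/2) * |((d : ℤ):ℝ)|))) ?_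
            · refine le_trans key (ENNReal.ofReal_le_ofReal ?_)
              have hrval : r (a, s, d) = 2*κ*Pa * (|((d : ℤ):ℝ)|)⁻¹ := by
                simp only [hrdef]
                rw [if_neg hd, add_zero]
              have heq : 2*κ/(P ^ (α/2) * |((d : ℤ):ℝ)|)
                  = 2*κ*Pa * (|((d : ℤ):ℝ)|)⁻¹ := by
                rw [hPadef, Real.rpow_neg hP0.le, div_eq_mul_inv, mul_inv]
                ring
              rw [hrval, heq]
            · intro x y w hx hy hw
              refine le_trans (measure_mono ?_)
                (lin_slice (Real.sqrt (P ^ (2-α)) * (x*w) * a + Real.sqrt P * (y*x) * s)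
                  (Real.sqrt (P ^ α) * y * d) κ
                  (P ^ (α/2) * |((d : ℤ):ℝ)|) hB0pos ?_)
              · intro z hz
                simp only [hBaddef, Set.mem_setOf_eq] at hz
                rw [if_neg ha] at hz
                obtain ⟨hcube, habs⟩ := hz
                refine ⟨hcube.2.2.1, ?_⟩
                have heq : Real.sqrt (P ^ (2-α)) * (x*w) * a + Real.sqrt P * (y*x) * s
                    + Real.sqrt (P ^ α) * y * d * z = L (a, s, d) (x, y, z, w) := by
                  simp only [hLdef]
                  ring
                rw [heq]
                exact habs
              · rw [abs_mul, abs_mul, hsC, abs_of_pos hPa',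
                  abs_of_pos (by linarith [hy.1] : (0:ℝ) < y)]
                have : P ^ (α/2) * |((d : ℤ):ℝ)| ≤ P ^ (α/2) * y * |((d : ℤ):ℝ)| := by
                  nlinarith [hy.1, abs_nonneg ((d:ℤ):ℝ)]
                linarith
      -- sum up
      have h0mem : (0:ℤ) ∈ I₁ := by
        rw [hI₁def, Finset.mem_Icc]; omega
      obtain ⟨H₁, hH₁def⟩ : ∃ x : ℝ, x = ∑ d ∈ I₁, (|((d : ℤ):ℝ)|)⁻¹ := ⟨_, rfl⟩
      obtain ⟨H₂, hH₂def⟩ : ∃ x : ℝ, x = ∑ s ∈ I₂, (|((s : ℤ):ℝ)|)⁻¹ := ⟨_, rfl⟩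
      have hH₁0 : 0 ≤ H₁ := by
        rw [hH₁def]; exact Finset.sum_nonneg fun i _ => by positivity
      have hH₂0 : 0 ≤ H₂ := by
        rw [hH₂def]; exact Finset.sum_nonneg fun i _ => by positivity
      have hsumval : ∑ Δ ∈ D, r Δ
          = (I₁.card:ℝ)*((I₂.card:ℝ)*(2*κ*Pa*H₁) + 2*κ*Pb*H₂) := by
        rw [hDdef, Finset.sum_product]
        have hin : ∀ a ∈ I₁, ∑ p ∈ I₂ ×ˢ I₁, r (a, p)
            = (I₂.card:ℝ)*(2*κ*Pa*H₁) + 2*κ*Pb*H₂ := by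
          intro a _
          rw [Finset.sum_product]
          have hsd : ∀ s ∈ I₂, ∑ d ∈ I₁, r (a, s, d)
              = 2*κ*Pa*H₁ + 2*κ*Pb*(|((s : ℤ):ℝ)|)⁻¹ := by
            intro s _
            simp only [hrdef]
            rw [Finset.sum_add_distrib, ← Finset.mul_sum]
            congr 1
            · rw [hH₁def]
            · rw [Finset.sum_ite_eq' I₁ (0:ℤ) (fun _ => 2*κ*Pb*(|((s : ℤ):ℝ)|)⁻¹),
                if_pos h0mem]
          rw [Finset.sum_congr rfl hsd, Finset.sum_add_distrib, Finset.sum_const,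
            ← Finset.mul_sum, nsmul_eq_mul, hH₂def]
        rw [Finset.sum_congr rfl hin, Finset.sum_const, nsmul_eq_mul]
      -- cardinalities
      have hcard1 : (I₁.card:ℝ) = 4*(m:ℝ)+1 := by
        rw [hI₁def, Int.card_Icc]
        have h : (2*m + 1 - -(2*m)) = 4*m+1 := by ring
        rw [h]
        have h2 : (((4*m+1).toNat : ℤ) : ℝ) = ((4*m+1 : ℤ) : ℝ) := by
          rw [Int.toNat_of_nonneg (by omega)]
        push_cast at h2 ⊢
        linarith
      have hcard2 : (I₂.card:ℝ) = 8*(m:ℝ)+1 := by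
        rw [hI₂def, Int.card_Icc]
        have h : (4*m + 1 - -(4*m)) = 8*m+1 := by ring
        rw [h]
        have h2 : (((8*m+1).toNat : ℤ) : ℝ) = ((8*m+1 : ℤ) : ℝ) := by
          rw [Int.toNat_of_nonneg (by omega)]
        push_cast at h2 ⊢
        linarith
      -- harmonic bounds
      have hH₁le : H₁ ≤ 2*(1 + Real.log (2*(m:ℝ))) := by
        have hk : (((2*m).toNat : ℤ)) = 2*m := Int.toNat_of_nonneg (by omega)
        have hIeq : I₁ = Finset.Icc (-(((2*m).toNat : ℕ):ℤ)) (((2*m).toNat : ℕ):ℤ) := by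
          rw [hI₁def, hk]
        have hb := harmonic_int (2*m).toNat (by omega)
        have hc : ((((2*m).toNat : ℕ)):ℝ) = 2*(m:ℝ) := by exact_mod_cast congrArg (fun z : ℤ => (z:ℝ)) hk
        rw [hc] at hb
        rw [hH₁def, hIeq]
        exact hb
      have hH₂le : H₂ ≤ 2*(1 + Real.log (4*(m:ℝ))) := by
        have hk : (((4*m).toNat : ℤ)) = 4*m := Int.toNat_of_nonneg (by omega)
        have hIeq : I₂ = Finset.Icc (-(((4*m).toNat : ℕ):ℤ)) (((4*m).toNat : ℕ):ℤ) := by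
          rw [hI₂def, hk]
        have hb := harmonic_int (4*m).toNat (by omega)
        have hc : ((((4*m).toNat : ℕ)):ℝ) = 4*(m:ℝ) := by exact_mod_cast congrArg (fun z : ℤ => (z:ℝ)) hk
        rw [hc] at hb
        rw [hH₂def, hIeq]
        exact hb
      -- log bounds
      have hlogP0 : 0 ≤ Real.log P := Real.log_nonneg hP1.le
      have hlog2 : Real.log 2 < 0.6931471808 := Real.log_two_lt_d9
      have hlogQ : Real.log Q = ((α/3 - ε)/2) * Real.log P := by
        rw [hQdef, Real.log_rpow hP0]
      have he14 : (α/3 - ε)/2 ≤ 1/4 := by linarith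
      have hlogM : Real.log (m:ℝ) ≤ Real.log Q := Real.log_le_log (by linarith) hMQ
      have hlogMP : Real.log (m:ℝ) ≤ (1/4) * Real.log P := by
        have := mul_le_mul_of_nonneg_right he14 hlogP0
        rw [hlogQ] at hlogM
        linarith
      have hG1 : 1 + Real.log (2*(m:ℝ)) ≤ 3 + Real.log P := by
        rw [Real.log_mul (by norm_num) (by linarith)]
        linarith
      have hG2 : 1 + Real.log (4*(m:ℝ)) ≤ 3 + Real.log P := by
        have h4 : (4:ℝ)*(m:ℝ) = 2*(2*(m:ℝ)) := by ring
        rw [h4, Real.log_mul (by norm_num) (by linarith),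
          Real.log_mul (by norm_num) (by linarith)]
        linarith
      have hGpos : (0:ℝ) < 3 + Real.log P := by linarith
      -- rpow exponent estimates
      have hW0 : 0 ≤ P ^ (-ε/2) := Real.rpow_nonneg hP0.le _
      have hQQQPa : Q*Q*Q*Pa ≤ P ^ (-ε/2) * P ^ (-ε/2) := by
        have h1 : Q*Q*Q*Pa
            = P ^ ((α/3 - ε)/2 + (α/3 - ε)/2 + (α/3 - ε)/2 + -(α/2)) := by
          rw [hQdef, hPadef, Real.rpow_add hP0, Real.rpow_add hP0, Real.rpow_add hP0]
        calc Q*Q*Q*Pa = P ^ ((α/3 - ε)/2 + (α/3 - ε)/2 + (α/3 - ε)/2 + -(α/2)) := h1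
          _ ≤ P ^ (-ε/2 + -ε/2) := Real.rpow_le_rpow_of_exponent_le hP1.le (by linarith)
          _ = P ^ (-ε/2) * P ^ (-ε/2) := Real.rpow_add hP0 _ _
      have hQQPb : Q*Q*Pb ≤ P ^ (-ε/2) * P ^ (-ε/2) := by
        have h1 : Q*Q*Pb = P ^ ((α/3 - ε)/2 + (α/3 - ε)/2 + -((1:ℝ)/2)) := by
          rw [hQdef, hPbdef, Real.rpow_add hP0, Real.rpow_add hP0]
        calc Q*Q*Pb = P ^ ((α/3 - ε)/2 + (α/3 - ε)/2 + -((1:ℝ)/2)) := h1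
          _ ≤ P ^ (-ε/2 + -ε/2) := Real.rpow_le_rpow_of_exponent_le hP1.le (by linarith)
          _ = P ^ (-ε/2) * P ^ (-ε/2) := Real.rpow_add hP0 _ _
      -- assemble real bound
      have hκ0 : 0 ≤ κ := hκpos.le
      have hTγ0 : 0 ≤ T/γ := div_nonneg hTpos.le hγ₁.le
      have hH₁G : H₁ ≤ 2*(3 + Real.log P) := by linarith
      have hH₂G : H₂ ≤ 2*(3 + Real.log P) := by linarith
      have hc1le : (I₁.card:ℝ) ≤ 5*Q := by rw [hcard1]; linarith
      have hc2le : (I₂.card:ℝ) ≤ 9*Q := by rw [hcard2]; linarith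
      have e1 : 2*κ*Pa*H₁ ≤ 2*κ*Pa*(2*(3 + Real.log P)) :=
        mul_le_mul_of_nonneg_left hH₁G (by positivity)
      have e2 : 2*κ*Pb*H₂ ≤ 2*κ*Pb*(2*(3 + Real.log P)) :=
        mul_le_mul_of_nonneg_left hH₂G (by positivity)
      have e3 : (I₂.card:ℝ)*(2*κ*Pa*H₁) ≤ (9*Q)*(2*κ*Pa*(2*(3 + Real.log P))) :=
        mul_le_mul hc2le e1 (by positivity) (by positivity)
      have e4 : (I₂.card:ℝ)*(2*κ*Pa*H₁) + 2*κ*Pb*H₂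
          ≤ (9*Q)*(2*κ*Pa*(2*(3 + Real.log P))) + 2*κ*Pb*(2*(3 + Real.log P)) :=
        add_le_add e3 e2
      have e5 : ∑ Δ ∈ D, r Δ
          ≤ (5*Q)*((9*Q)*(2*κ*Pa*(2*(3 + Real.log P))) + 2*κ*Pb*(2*(3 + Real.log P))) := by
        rw [hsumval]
        exact mul_le_mul hc1le e4 (by positivity) (by positivity)
      have hfac : (5*Q)*((9*Q)*(2*κ*Pa*(2*(3 + Real.log P))) + 2*κ*Pb*(2*(3 + Real.log P)))
          = 180*(T/γ)*(3 + Real.log P)*(Q*Q*Q*Pa) + 20*(T/γ)*(3 + Real.log P)*(Q*Q*Pb) := by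
        rw [hκdef]
        field_simp
        ring
      have e6 : 180*(T/γ)*(3 + Real.log P)*(Q*Q*Q*Pa)
          ≤ 180*(T/γ)*(3 + Real.log P)*(P ^ (-ε/2) * P ^ (-ε/2)) :=
        mul_le_mul_of_nonneg_left hQQQPa (by positivity)
      have e7 : 20*(T/γ)*(3 + Real.log P)*(Q*Q*Pb)
          ≤ 20*(T/γ)*(3 + Real.log P)*(P ^ (-ε/2) * P ^ (-ε/2)) :=
        mul_le_mul_of_nonneg_left hQQPb (by positivity)
      have hWev : P ^ (-(ε/2)) = P ^ (-ε/2) := by congr 1; ring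
      have hC3' : 200*(T/γ)*((3 + Real.log P) * P ^ (-ε/2)) ≤ 258048*δ := by
        rw [← hWev]; exact hC3
      have e8 : 180*(T/γ)*(3 + Real.log P)*(P ^ (-ε/2) * P ^ (-ε/2))
            + 20*(T/γ)*(3 + Real.log P)*(P ^ (-ε/2) * P ^ (-ε/2))
          = (200*(T/γ)*((3 + Real.log P) * P ^ (-ε/2))) * P ^ (-ε/2) := by ring
      have e9 : (200*(T/γ)*((3 + Real.log P) * P ^ (-ε/2))) * P ^ (-ε/2)
          ≤ (258048*δ) * P ^ (-ε/2) := mul_le_mul_of_nonneg_right hC3' hW0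
      have hfinal : ∑ Δ ∈ D, r Δ ≤ 258048 * δ * P ^ (-ε/2) := by
        rw [hfac] at e5
        linarith [e5, e6, e7, e9, e8.le, e8.ge]
      calc volume (⋃ Δ ∈ D, Bad Δ) ≤ ∑ Δ ∈ D, volume (Bad Δ) :=
            measure_biUnion_finset_le D Bad
        _ ≤ ∑ Δ ∈ D, ENNReal.ofReal (r Δ) := Finset.sum_le_sum fun Δ _ => hBadBound Δ
        _ = ENNReal.ofReal (∑ Δ ∈ D, r Δ) :=
            (ENNReal.ofReal_sum_of_nonneg fun Δ _ => hrnonneg Δ).symm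
        _ ≤ ENNReal.ofReal (258048 * δ * P ^ (-ε/2)) := ENNReal.ofReal_le_ofReal hfinal
    · -- decoding
      intro h₁₁ h₁₂ h₂₁ h₂₂ hmem Ω mΩ μ hprob v₁c v₂c u₁ u₂ z₁ hv₁ hv₂ hu₁ hu₂ hz₁
        hmap₁ hmap₂ hmap₃ hmap₄ hmapz _hindep
      obtain ⟨hcube, hnot⟩ := hmem
      obtain ⟨hx1, hx2, hx3, hx4⟩ := hcube
      have hsep : ∀ Δa Δs Δd : ℤ, Δa ≠ 0 → -(2*m) ≤ Δa → Δa ≤ 2*m → -(4*m) ≤ Δs → Δs ≤ 4*m →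
          -(2*m) ≤ Δd → Δd ≤ 2*m → κ ≤ |L (Δa, Δs, Δd) (h₁₁, h₁₂, h₂₁, h₂₂)| := by
        intro Δa Δs Δd hne b1 b2 b3 b4 b5 b6
        by_contra hlt
        push_neg at hlt
        apply hnot
        have hΔD : ((Δa, Δs, Δd) : ℤ×ℤ×ℤ) ∈ D := by
          rw [hDdef]
          simp only [Finset.mem_product, hI₁def, hI₂def, Finset.mem_Icc]
          exact ⟨⟨b1, b2⟩, ⟨b3, b4⟩, ⟨b5, b6⟩⟩
        refine Set.mem_biUnion hΔD ?_
        rw [hBaddef]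
        simp only
        rw [if_neg hne]
        exact ⟨⟨hx1, hx2, hx3, hx4⟩, hlt⟩
      obtain ⟨pt, hptdef⟩ : ∃ p : ℤ → ℤ → ℤ → ℝ, p = fun (a s d : ℤ) =>
        Real.sqrt (P ^ (2 - α)) * (h₁₁ * h₂₂) * (ξ*(a:ℝ)) + Real.sqrt P * (h₁₂ * h₁₁) * (ξ*(s:ℝ))
          + Real.sqrt (P ^ α) * (h₁₂ * h₂₁) * (ξ*(d:ℝ)) := ⟨_, rfl⟩
      obtain ⟨U, hUdef⟩ : ∃ u : ℤ → Set ℝ, u = fun a =>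
        ⋃ s ∈ Finset.Icc (-(2*m)) (2*m), ⋃ d ∈ Finset.Icc (-m) m,
          Metric.ball (pt a s d) T := ⟨_, rfl⟩
      have hUmeas : ∀ a, MeasurableSet (U a) := by
        intro a
        rw [hUdef]
        exact MeasurableSet.biUnion (Finset.countable_toSet _) fun s _ =>
          MeasurableSet.biUnion (Finset.countable_toSet _) fun d _ => measurableSet_ball
      refine ⟨fun y => ∑ a ∈ Finset.Icc (-m) m,
          (ξ*(a:ℝ)) * Set.indicator (U a) (fun _ => (1:ℝ)) y, ?_, ?_⟩
      · apply Finset.measurable_sum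
        intro a _
        exact (measurable_const.indicator (hUmeas a)).const_mul _
      have hmeasPAM : MeasurableSet (PAM ξ Q) := PAM_measurable ξ Q
      have hPAMfin := PAM_finite ξ Q
      have hPAMne : (PAM ξ Q).Nonempty := ⟨0, PAM_zero_mem ξ Q (by linarith)⟩
      have hone : ∀ (g : Ω → ℝ), Measurable g → Measure.map g μ = uniformOn (PAM ξ Q) →
          μ (g ⁻¹' (PAM ξ Q)) = 1 := by
        intro g hg hmap
        rw [← Measure.map_apply hg hmeasPAM, hmap]
        exact uniformOn_self hPAMfin hPAMne
      have hzero : ∀ (g : Ω → ℝ), Measurable g → Measure.map g μ = uniformOn (PAM ξ Q) →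
          μ (g ⁻¹' (PAM ξ Q))ᶜ = 0 := by
        intro g hg hmap
        rw [measure_compl (hg hmeasPAM) (measure_ne_top μ _), hone g hg hmap, measure_univ]
        simp
      have hEz : μ (z₁ ⁻¹' (Set.Ioo (-T) T)) = gaussianReal 0 1 (Set.Ioo (-T) T) := by
        rw [← Measure.map_apply hz₁ measurableSet_Ioo, hmapz]
      obtain ⟨R, hRdef⟩ : ∃ R : Set Ω, R = v₁c ⁻¹' (PAM ξ Q) ∩ (v₂c ⁻¹' (PAM ξ Q)
          ∩ (u₁ ⁻¹' (PAM ξ Q) ∩ u₂ ⁻¹' (PAM ξ Q))) := ⟨_, rfl⟩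
      have hRc : μ Rᶜ = 0 := by
        rw [hRdef, Set.compl_inter, Set.compl_inter, Set.compl_inter]
        refine measure_union_null (hzero _ hv₁ hmap₁) (measure_union_null (hzero _ hv₂ hmap₂)
          (measure_union_null (hzero _ hu₁ hmap₃) (hzero _ hu₂ hmap₄)))
      have hfl : ∀ k : ℤ, -Q ≤ (k:ℝ) → (k:ℝ) ≤ Q → -m ≤ k ∧ k ≤ m := by
        intro k hk1 hk2
        constructor
        · have h : (-k : ℤ) ≤ m := by
            rw [hmdef]
            exact Int.le_floor.mpr (by push_cast; linarith)
          omega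
        · rw [hmdef]; exact Int.le_floor.mpr hk2
      have hξκ : ξ * κ = 2*T := by
        rw [hξdef, hκdef]
        field_simp
      have hincl : z₁ ⁻¹' (Set.Ioo (-T) T) ∩ R ⊆
          {ω | (∑ a ∈ Finset.Icc (-m) m,
            (ξ*(a:ℝ)) * Set.indicator (U a) (fun _ => (1:ℝ))
              (Real.sqrt (P ^ (2 - α)) * (h₁₁ * h₂₂) * v₁c ω
                + Real.sqrt P * (h₁₂ * h₁₁) * (v₂c ω + u₁ ω)
                + Real.sqrt (P ^ α) * (h₁₂ * h₂₁) * u₂ ω + z₁ ω)) = v₁c ω} := by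
        intro ω hω
        rw [hRdef] at hω
        obtain ⟨hzω, hv1ω, hv2ω, hu1ω, hu2ω⟩ := hω
        obtain ⟨a₀, hva, ha₀l, ha₀r⟩ := hv1ω
        obtain ⟨b₀, hvb, hb₀l, hb₀r⟩ := hv2ω
        obtain ⟨c₀, hvc, hc₀l, hc₀r⟩ := hu1ω
        obtain ⟨d₀, hvd, hd₀l, hd₀r⟩ := hu2ω
        obtain ⟨ha₀m1, ha₀m2⟩ := hfl a₀ ha₀l ha₀r
        obtain ⟨hb₀m1, hb₀m2⟩ := hfl b₀ hb₀l hb₀r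
        obtain ⟨hc₀m1, hc₀m2⟩ := hfl c₀ hc₀l hc₀r
        obtain ⟨hd₀m1, hd₀m2⟩ := hfl d₀ hd₀l hd₀r
        have hzabs : |z₁ ω| < T := abs_lt.mpr ⟨hzω.1, hzω.2⟩
        have hy : Real.sqrt (P ^ (2 - α)) * (h₁₁ * h₂₂) * v₁c ω
            + Real.sqrt P * (h₁₂ * h₁₁) * (v₂c ω + u₁ ω)
            + Real.sqrt (P ^ α) * (h₁₂ * h₂₁) * u₂ ω + z₁ ω
            = pt a₀ (b₀+c₀) d₀ + z₁ ω := by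
          rw [hptdef, hva, hvb, hvc, hvd]
          push_cast
          ring
        simp only [Set.mem_setOf_eq]
        rw [hy]
        have hymem : pt a₀ (b₀+c₀) d₀ + z₁ ω ∈ U a₀ := by
          rw [hUdef]
          have hsmem : (b₀+c₀) ∈ Finset.Icc (-(2*m)) (2*m) := Finset.mem_Icc.mpr ⟨by omega, by omega⟩
          have hdmem : d₀ ∈ Finset.Icc (-m) m := Finset.mem_Icc.mpr ⟨by omega, by omega⟩
          refine Set.mem_biUnion hsmem ?_
          refine Set.mem_biUnion hdmem ?_
          rw [Metric.mem_ball, Real.dist_eq]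
          have h : pt a₀ (b₀+c₀) d₀ + z₁ ω - pt a₀ (b₀+c₀) d₀ = z₁ ω := by ring
          rw [h]
          exact hzabs
        have hynot : ∀ a ∈ Finset.Icc (-m) m, a ≠ a₀ →
            pt a₀ (b₀+c₀) d₀ + z₁ ω ∉ U a := by
          intro a hamem hane hyU
          rw [hUdef] at hyU
          simp only [Set.mem_iUnion, exists_prop] at hyU
          obtain ⟨s, hs, d, hd, hball⟩ := hyU
          obtain ⟨ham1, ham2⟩ := Finset.mem_Icc.mp hamem
          obtain ⟨hsm1, hsm2⟩ := Finset.mem_Icc.mp hs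
          obtain ⟨hdm1, hdm2⟩ := Finset.mem_Icc.mp hd
          have h1 : |pt a₀ (b₀+c₀) d₀ + z₁ ω - pt a s d| < T := by
            rw [← Real.dist_eq]
            exact Metric.mem_ball.mp hball
          have hdiff : pt a s d - pt a₀ (b₀+c₀) d₀
              = ξ * L (a - a₀, s - (b₀+c₀), d - d₀) (h₁₁, h₁₂, h₂₁, h₂₂) := by
            rw [hptdef, hLdef]
            push_cast
            ring
          have hsepa := hsep (a - a₀) (s - (b₀+c₀)) (d - d₀) (by omega) (by omega) (by omega)
            (by omega) (by omega) (by omega) (by omega)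
          have hLξ : 2*T ≤ |pt a s d - pt a₀ (b₀+c₀) d₀| := by
            rw [hdiff, abs_mul, abs_of_pos hξpos]
            calc 2*T = ξ * κ := hξκ.symm
              _ ≤ ξ * |L (a - a₀, s - (b₀+c₀), d - d₀) (h₁₁, h₁₂, h₂₁, h₂₂)| :=
                mul_le_mul_of_nonneg_left hsepa hξpos.le
          have htri : |pt a s d - pt a₀ (b₀+c₀) d₀| < 2*T := by
            have h2 := abs_sub_le (pt a s d) (pt a₀ (b₀+c₀) d₀ + z₁ ω) (pt a₀ (b₀+c₀) d₀)
            have h3 : |pt a s d - (pt a₀ (b₀+c₀) d₀ + z₁ ω)|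
                = |pt a₀ (b₀+c₀) d₀ + z₁ ω - pt a s d| := abs_sub_comm _ _
            have h4 : |pt a₀ (b₀+c₀) d₀ + z₁ ω - pt a₀ (b₀+c₀) d₀| = |z₁ ω| := by
              have h : pt a₀ (b₀+c₀) d₀ + z₁ ω - pt a₀ (b₀+c₀) d₀ = z₁ ω := by ring
              rw [h]
            rw [h3, h4] at h2
            linarith
          linarith
        rw [Finset.sum_eq_single a₀]
        · rw [Set.indicator_of_mem hymem, mul_one]
          exact hva.symm
        · intro b hb hbne
          rw [Set.indicator_of_notMem (hynot b hb hbne), mul_zero]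
        · intro hnotin
          exact absurd (Finset.mem_Icc.mpr ⟨ha₀m1, ha₀m2⟩) hnotin
      have hz_le : μ (z₁ ⁻¹' (Set.Ioo (-T) T)) ≤ μ (z₁ ⁻¹' (Set.Ioo (-T) T) ∩ R) := by
        conv_lhs => rw [← Set.inter_union_compl (z₁ ⁻¹' (Set.Ioo (-T) T)) R]
        refine le_trans (measure_union_le _ _) ?_
        rw [measure_inter_null_of_null_right _ hRc, add_zero]
      calc ENNReal.ofReal (1-η) < gaussianReal 0 1 (Set.Ioo (-T) T) := hTg
        _ = μ (z₁ ⁻¹' (Set.Ioo (-T) T)) := hEz.symm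
        _ ≤ μ (z₁ ⁻¹' (Set.Ioo (-T) T) ∩ R) := hz_le
        _ ≤ _ := measure_mono hincl
end

section
/- Let α₁₁, α₁₂, α₂₁, α₂₂ ≥ 0 be reals and h₁₁, h₁₂, h₂₁, h₂₂ ∈ (1, 2]. For P > 1 define (logarithms base 2) R₁(P) = (1/2)·log(1 + |h₁₁|²·P^{α₁₁−α₂₁}/(1 + |h₁₂|²)) − (1/2)·log(1 + |h₂₁|²) and R₂(P) = (1/2)·log(1 + |h₂₂|²·P^{α₂₂−α₁₂}/(1 + |h₂₁|²)) − (1/2)·log(1 + |h₁₂|²). Then (R₁(P) + R₂(P)) / ((1/2)·log P) converges to max(α₁₁ − α₂₁, 0) + max(α₂₂ − α₁₂, 0) as P → ∞. -/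
open Real Filter


lemma logb_atTop : Tendsto (fun P : ℝ => Real.logb 2 P) atTop atTop :=
  Real.tendsto_logb_atTop one_lt_two

lemma inv_logb_zero : Tendsto (fun P : ℝ => (Real.logb 2 P)⁻¹) atTop (nhds 0) :=
  logb_atTop.inv_tendsto_atTop

lemma aux_lim (c a : ℝ) (hc : 0 < c) :
    Tendsto (fun P : ℝ => Real.logb 2 (1 + c * P ^ a) / Real.logb 2 P)
      atTop (nhds (max a 0)) := by
  rcases lt_trichotomy a 0 with ha | ha | ha
  · rw [max_eq_right ha.le]
    have h1 : Tendsto (fun P : ℝ => Real.logb 2 (1 + c * P ^ a)) atTop (nhds 0) := by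
      have hp : Tendsto (fun P : ℝ => (P : ℝ) ^ a) atTop (nhds 0) := by
        have := tendsto_rpow_neg_atTop (neg_pos.mpr ha)
        simpa using this
      have h2 : Tendsto (fun P : ℝ => 1 + c * P ^ a) atTop (nhds 1) := by
        have := hp.const_mul c
        simpa using (tendsto_const_nhds.add this : Tendsto (fun P : ℝ => 1 + c * P ^ a) atTop (nhds (1 + c * 0)))
      have hcont : ContinuousAt (fun x : ℝ => Real.logb 2 x) 1 := by
        unfold Real.logb
        exact (Real.continuousAt_log one_ne_zero).div_const _
      have := hcont.tendsto.comp h2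
      simpa [Function.comp_def] using this
    simpa [div_eq_mul_inv] using h1.mul inv_logb_zero
  · subst ha
    simp only [Real.rpow_zero, mul_one, max_self]
    simpa [div_eq_mul_inv] using inv_logb_zero.const_mul (Real.logb 2 (1 + c))
  · rw [max_eq_left ha.le]
    have key : ∀ᶠ P : ℝ in atTop,
        Real.logb 2 (1 + c * P ^ a) / Real.logb 2 P
          = a + Real.logb 2 (P ^ (-a) + c) / Real.logb 2 P := by
      filter_upwards [eventually_ge_atTop (2 : ℝ)] with P hP
      have hP0 : (0 : ℝ) < P := by linarith
      have hL : Real.logb 2 P ≠ 0 := by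
        have : (1 : ℝ) ≤ Real.logb 2 P := by
          rw [show (1:ℝ) = Real.logb 2 2 by simp]
          exact Real.logb_le_logb_of_le one_lt_two (by norm_num) hP
        linarith
      have hprod : 1 + c * P ^ a = P ^ a * (P ^ (-a) + c) := by
        rw [mul_add, ← Real.rpow_add hP0]
        rw [add_neg_cancel, Real.rpow_zero]; ring
      have hpa : (0 : ℝ) < P ^ a := Real.rpow_pos_of_pos hP0 a
      have hna : (0 : ℝ) < P ^ (-a) + c := by positivity
      rw [hprod, Real.logb_mul hpa.ne' hna.ne']
      have : Real.logb 2 (P ^ a) = a * Real.logb 2 P := by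
        simp [Real.logb, Real.log_rpow hP0, mul_div_assoc]
      rw [this, add_div, mul_div_assoc, div_self hL, mul_one]
    have h2 : Tendsto (fun P : ℝ => Real.logb 2 (P ^ (-a) + c)) atTop (nhds (Real.logb 2 c)) := by
      have hp : Tendsto (fun P : ℝ => (P : ℝ) ^ (-a)) atTop (nhds 0) :=
        tendsto_rpow_neg_atTop ha
      have h3 : Tendsto (fun P : ℝ => P ^ (-a) + c) atTop (nhds c) := by
        simpa using hp.add tendsto_const_nhds
      have hcont : ContinuousAt (fun x : ℝ => Real.logb 2 x) c := by
        unfold Real.logb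
        exact (Real.continuousAt_log hc.ne').div_const _
      exact hcont.tendsto.comp h3
    have h4 : Tendsto (fun P : ℝ => a + Real.logb 2 (P ^ (-a) + c) / Real.logb 2 P)
        atTop (nhds (a + Real.logb 2 c * 0)) := by
      exact tendsto_const_nhds.add (by simpa [div_eq_mul_inv] using h2.mul inv_logb_zero)
    have h5 : Tendsto (fun P : ℝ => Real.logb 2 (1 + c * P ^ a) / Real.logb 2 P)
        atTop (nhds (a + Real.logb 2 c * 0)) := h4.congr' (Filter.EventuallyEq.symm key)
    simpa using h5

/-- The GWC-TIN achievable secure sum rate, normalized by `(1/2)·log P`, converges to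
the secure sum GDoF `(α₁₁ − α₂₁)⁺ + (α₂₂ − α₁₂)⁺` as `P → ∞`. -/
theorem gwc_tin_sum_gdof
    (α₁₁ α₁₂ α₂₁ α₂₂ h₁₁ h₁₂ h₂₁ h₂₂ : ℝ)
    (hα₁₁ : 0 ≤ α₁₁) (hα₁₂ : 0 ≤ α₁₂) (hα₂₁ : 0 ≤ α₂₁) (hα₂₂ : 0 ≤ α₂₂)
    (hh₁₁ : h₁₁ ∈ Set.Ioc (1 : ℝ) 2) (hh₁₂ : h₁₂ ∈ Set.Ioc (1 : ℝ) 2)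
    (hh₂₁ : h₂₁ ∈ Set.Ioc (1 : ℝ) 2) (hh₂₂ : h₂₂ ∈ Set.Ioc (1 : ℝ) 2) :
    Tendsto (fun P : ℝ =>
        (((1 / 2) * Real.logb 2 (1 + |h₁₁| ^ 2 * P ^ (α₁₁ - α₂₁) / (1 + |h₁₂| ^ 2))
            - (1 / 2) * Real.logb 2 (1 + |h₂₁| ^ 2))
          + ((1 / 2) * Real.logb 2 (1 + |h₂₂| ^ 2 * P ^ (α₂₂ - α₁₂) / (1 + |h₂₁| ^ 2))
              - (1 / 2) * Real.logb 2 (1 + |h₁₂| ^ 2)))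
          / ((1 / 2) * Real.logb 2 P))
      atTop (nhds (max (α₁₁ - α₂₁) 0 + max (α₂₂ - α₁₂) 0)) := by
  have habs : ∀ h : ℝ, h ∈ Set.Ioc (1 : ℝ) 2 → (0 : ℝ) < |h| ^ 2 := by
    intro h hh
    have : (0:ℝ) < h := lt_trans one_pos hh.1
    positivity
  have hd₁₂ : (0:ℝ) < 1 + |h₁₂| ^ 2 := by have := habs _ hh₁₂; linarith
  have hd₂₁ : (0:ℝ) < 1 + |h₂₁| ^ 2 := by have := habs _ hh₂₁; linarith
  set a₁ := α₁₁ - α₂₁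
  set a₂ := α₂₂ - α₁₂
  set c₁ := |h₁₁| ^ 2 / (1 + |h₁₂| ^ 2) with hc₁def
  set c₂ := |h₂₂| ^ 2 / (1 + |h₂₁| ^ 2) with hc₂def
  have hc₁ : 0 < c₁ := div_pos (habs _ hh₁₁) hd₁₂
  have hc₂ : 0 < c₂ := div_pos (habs _ hh₂₂) hd₂₁
  set K : ℝ := Real.logb 2 (1 + |h₂₁| ^ 2) + Real.logb 2 (1 + |h₁₂| ^ 2) with hK
  have key : ∀ᶠ P : ℝ in atTop,
      Real.logb 2 (1 + c₁ * P ^ a₁) / Real.logb 2 P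
        + Real.logb 2 (1 + c₂ * P ^ a₂) / Real.logb 2 P
        - K * (Real.logb 2 P)⁻¹
      = (((1 / 2) * Real.logb 2 (1 + |h₁₁| ^ 2 * P ^ a₁ / (1 + |h₁₂| ^ 2))
            - (1 / 2) * Real.logb 2 (1 + |h₂₁| ^ 2))
          + ((1 / 2) * Real.logb 2 (1 + |h₂₂| ^ 2 * P ^ a₂ / (1 + |h₂₁| ^ 2))
              - (1 / 2) * Real.logb 2 (1 + |h₁₂| ^ 2)))
          / ((1 / 2) * Real.logb 2 P) := by
    filter_upwards [eventually_ge_atTop (2 : ℝ)] with P hP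
    have hL : Real.logb 2 P ≠ 0 := by
      have : (1 : ℝ) ≤ Real.logb 2 P := by
        rw [show (1:ℝ) = Real.logb 2 2 by simp]
        exact Real.logb_le_logb_of_le one_lt_two (by norm_num) hP
      linarith
    have e₁ : 1 + |h₁₁| ^ 2 * P ^ a₁ / (1 + |h₁₂| ^ 2) = 1 + c₁ * P ^ a₁ := by
      rw [hc₁def]; ring
    have e₂ : 1 + |h₂₂| ^ 2 * P ^ a₂ / (1 + |h₂₁| ^ 2) = 1 + c₂ * P ^ a₂ := by
      rw [hc₂def]; ring
    rw [e₁, e₂, hK]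
    field_simp
    ring
  have h1 := (aux_lim c₁ a₁ hc₁).add (aux_lim c₂ a₂ hc₂)
  have h2 := inv_logb_zero.const_mul K
  have h3 := h1.sub h2
  have h4 : Tendsto (fun P : ℝ =>
      Real.logb 2 (1 + c₁ * P ^ a₁) / Real.logb 2 P
        + Real.logb 2 (1 + c₂ * P ^ a₂) / Real.logb 2 P
        - K * (Real.logb 2 P)⁻¹) atTop (nhds (max a₁ 0 + max a₂ 0)) := by
    simpa using h3
  exact h4.congr' key
end

section
/- Let α₁₁, α₁₂, α₂₁, α₂₂ ≥ 0 be reals and h₁₁, h₁₂, h₂₁, h₂₂ ∈ (1, 2]. For P > 1 define (logarithms base 2) U(P) = (1/2)·log(1 + P^{α₂₂−α₁₂}·|h₂₂|²/|h₁₂|² + P^{α₂₁−max(α₁₁−α₁₂,0)}·|h₂₁|²/|h₁₁|²) + (1/2)·log(1 + P^{α₁₁−α₂₁}·|h₁₁|²/|h₂₁|² + P^{α₁₂−max(α₂₂−α₂₁,0)}·|h₁₂|²/|h₂₂|²) + log 10. Then U(P) / ((1/2)·log P) converges to max(α₂₁ − max(α₁₁ − α₁₂, 0), α₂₂ − α₁₂,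 0) + max(α₁₂ − max(α₂₂ − α₂₁, 0), α₁₁ − α₂₁, 0) as P → ∞. -/
open Real Filter

lemma aux_tendsto (a b c₁ c₂ : ℝ) (hc₁ : 0 < c₁) (hc₂ : 0 < c₂) :
    Tendsto (fun P : ℝ => Real.logb 2 (1 + c₁ * P ^ a + c₂ * P ^ b) / Real.logb 2 P)
      atTop (nhds (max (max a b) 0)) := by
  set m := max (max a b) 0 with hm
  set cmin := min (min 1 c₁) c₂ with hcmin_def
  set cmax := 1 + c₁ + c₂ with hcmax_def
  have hcmin : 0 < cmin := lt_min (lt_min one_pos hc₁) hc₂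
  have hcmax : 0 < cmax := by positivity
  have hlogP : Tendsto (fun P : ℝ => Real.logb 2 P) atTop atTop :=
    Real.tendsto_logb_atTop one_lt_two
  have hzero : ∀ c : ℝ, Tendsto (fun P : ℝ => Real.logb 2 c / Real.logb 2 P + m)
      atTop (nhds m) := by
    intro c
    have := Tendsto.div_atTop (tendsto_const_nhds (x := Real.logb 2 c)) hlogP
    simpa using this.add (tendsto_const_nhds (x := m))
  apply tendsto_of_tendsto_of_tendsto_of_le_of_le' (hzero cmin) (hzero cmax)
  all_goals {
    filter_upwards [eventually_gt_atTop (1 : ℝ)] with P hP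
    have hP0 : (0 : ℝ) < P := by linarith
    have hlogP0 : 0 < Real.logb 2 P := Real.logb_pos one_lt_two hP
    have hPa : 0 < P ^ a := Real.rpow_pos_of_pos hP0 a
    have hPb : 0 < P ^ b := Real.rpow_pos_of_pos hP0 b
    have hPm : 0 < P ^ m := Real.rpow_pos_of_pos hP0 m
    have hsum : 0 < 1 + c₁ * P ^ a + c₂ * P ^ b := by positivity
    have hbound : cmin * P ^ m ≤ 1 + c₁ * P ^ a + c₂ * P ^ b ∧
        1 + c₁ * P ^ a + c₂ * P ^ b ≤ cmax * P ^ m := by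
      constructor
      · rcases max_cases (max a b) 0 with ⟨h, _⟩ | ⟨h, _⟩
        · rcases max_cases a b with ⟨h', _⟩ | ⟨h', _⟩
          · have : cmin * P ^ m ≤ c₁ * P ^ a := by
              rw [hm, h, h']
              exact mul_le_mul_of_nonneg_right ((min_le_left _ _).trans (min_le_right _ _)) hPa.le
            nlinarith
          · have : cmin * P ^ m ≤ c₂ * P ^ b := by
              rw [hm, h, h']
              exact mul_le_mul_of_nonneg_right (min_le_right _ _) hPb.le
            nlinarith
        · have : cmin * P ^ m ≤ 1 := by
            rw [hm, h, Real.rpow_zero, mul_one]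
            exact (min_le_left _ _).trans (min_le_left _ _)
          nlinarith
      · have h1 : (1 : ℝ) ≤ P ^ m := by
          rw [show (1:ℝ) = P ^ (0:ℝ) by rw [Real.rpow_zero]]
          exact Real.rpow_le_rpow_of_exponent_le hP.le (le_max_right _ _)
        have ha : P ^ a ≤ P ^ m :=
          Real.rpow_le_rpow_of_exponent_le hP.le ((le_max_left a b).trans (le_max_left _ _))
        have hb' : P ^ b ≤ P ^ m :=
          Real.rpow_le_rpow_of_exponent_le hP.le ((le_max_right a b).trans (le_max_left _ _))
        have := mul_le_mul_of_nonneg_left ha hc₁.le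
        have := mul_le_mul_of_nonneg_left hb' hc₂.le
        rw [hcmax_def]; nlinarith
    have hlogb_mul : ∀ c : ℝ, 0 < c →
        Real.logb 2 (c * P ^ m) = Real.logb 2 c + m * Real.logb 2 P := by
      intro c hc
      rw [Real.logb, Real.log_mul hc.ne' hPm.ne', Real.log_rpow hP0, Real.logb, Real.logb]
      ring
    first
    | · -- lower bound goal: lower ≤ f
        have h1 : Real.logb 2 (cmin * P ^ m) ≤ Real.logb 2 (1 + c₁ * P ^ a + c₂ * P ^ b) :=
          Real.logb_le_logb_of_le one_lt_two (by positivity) hbound.1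
        rw [hlogb_mul cmin hcmin] at h1
        rw [div_add' _ _ _ hlogP0.ne', div_le_div_iff₀ hlogP0 hlogP0]
        nlinarith
    | · -- upper bound goal
        have h1 : Real.logb 2 (1 + c₁ * P ^ a + c₂ * P ^ b) ≤ Real.logb 2 (cmax * P ^ m) :=
          Real.logb_le_logb_of_le one_lt_two hsum hbound.2
        rw [hlogb_mul cmax hcmax] at h1
        rw [div_add' _ _ _ hlogP0.ne', div_le_div_iff₀ hlogP0 hlogP0]
        nlinarith
  }

/-- The secure sum capacity upper bound, normalized by `(1/2)·log P`, converges to the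
corresponding GDoF expression as `P → ∞`. -/
theorem converse_sum_gdof
    (α₁₁ α₁₂ α₂₁ α₂₂ h₁₁ h₁₂ h₂₁ h₂₂ : ℝ)
    (hα₁₁ : 0 ≤ α₁₁) (hα₁₂ : 0 ≤ α₁₂) (hα₂₁ : 0 ≤ α₂₁) (hα₂₂ : 0 ≤ α₂₂)
    (hh₁₁ : h₁₁ ∈ Set.Ioc (1 : ℝ) 2) (hh₁₂ : h₁₂ ∈ Set.Ioc (1 : ℝ) 2)
    (hh₂₁ : h₂₁ ∈ Set.Ioc (1 : ℝ) 2) (hh₂₂ : h₂₂ ∈ Set.Ioc (1 : ℝ) 2) :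
    Tendsto (fun P : ℝ =>
        ((1 / 2) * Real.logb 2
            (1 + P ^ (α₂₂ - α₁₂) * |h₂₂| ^ 2 / |h₁₂| ^ 2
               + P ^ (α₂₁ - max (α₁₁ - α₁₂) 0) * |h₂₁| ^ 2 / |h₁₁| ^ 2)
          + (1 / 2) * Real.logb 2
              (1 + P ^ (α₁₁ - α₂₁) * |h₁₁| ^ 2 / |h₂₁| ^ 2
                 + P ^ (α₁₂ - max (α₂₂ - α₂₁) 0) * |h₁₂| ^ 2 / |h₂₂| ^ 2)
          + Real.logb 2 10)
          / ((1 / 2) * Real.logb 2 P))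
      atTop (nhds
        (max (max (α₂₁ - max (α₁₁ - α₁₂) 0) (α₂₂ - α₁₂)) 0
          + max (max (α₁₂ - max (α₂₂ - α₂₁) 0) (α₁₁ - α₂₁)) 0)) := by
  have h11 : (0:ℝ) < h₁₁ := lt_trans one_pos hh₁₁.1
  have h12 : (0:ℝ) < h₁₂ := lt_trans one_pos hh₁₂.1
  have h21 : (0:ℝ) < h₂₁ := lt_trans one_pos hh₂₁.1
  have h22 : (0:ℝ) < h₂₂ := lt_trans one_pos hh₂₂.1
  have c1 : 0 < |h₂₂| ^ 2 / |h₁₂| ^ 2 := by positivity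
  have c2 : 0 < |h₂₁| ^ 2 / |h₁₁| ^ 2 := by positivity
  have c3 : 0 < |h₁₁| ^ 2 / |h₂₁| ^ 2 := by positivity
  have c4 : 0 < |h₁₂| ^ 2 / |h₂₂| ^ 2 := by positivity
  have T1 := aux_tendsto (α₂₂ - α₁₂) (α₂₁ - max (α₁₁ - α₁₂) 0) _ _ c1 c2
  have T2 := aux_tendsto (α₁₁ - α₂₁) (α₁₂ - max (α₂₂ - α₂₁) 0) _ _ c3 c4
  have hlogP : Tendsto (fun P : ℝ => Real.logb 2 P) atTop atTop :=
    Real.tendsto_logb_atTop one_lt_two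
  have T3 : Tendsto (fun P : ℝ => 2 * Real.logb 2 10 / Real.logb 2 P) atTop (nhds 0) :=
    Tendsto.div_atTop tendsto_const_nhds hlogP
  have hsum := (T1.add T2).add T3
  rw [add_zero] at hsum
  have heq : (max (max (α₂₁ - max (α₁₁ - α₁₂) 0) (α₂₂ - α₁₂)) 0
      + max (max (α₁₂ - max (α₂₂ - α₂₁) 0) (α₁₁ - α₂₁)) 0)
      = (max (max (α₂₂ - α₁₂) (α₂₁ - max (α₁₁ - α₁₂) 0)) 0
      + max (max (α₁₁ - α₂₁) (α₁₂ - max (α₂₂ - α₂₁) 0)) 0) := by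
    rw [max_comm (α₂₂ - α₁₂), max_comm (α₁₁ - α₂₁)]
  rw [heq]
  apply hsum.congr'
  filter_upwards [eventually_gt_atTop (1 : ℝ)] with P hP
  have hlogP0 : 0 < Real.logb 2 P := Real.logb_pos one_lt_two hP
  have e1 : P ^ (α₂₂ - α₁₂) * |h₂₂| ^ 2 / |h₁₂| ^ 2
      = |h₂₂| ^ 2 / |h₁₂| ^ 2 * P ^ (α₂₂ - α₁₂) := by ring
  have e2 : P ^ (α₂₁ - max (α₁₁ - α₁₂) 0) * |h₂₁| ^ 2 / |h₁₁| ^ 2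
      = |h₂₁| ^ 2 / |h₁₁| ^ 2 * P ^ (α₂₁ - max (α₁₁ - α₁₂) 0) := by ring
  have e3 : P ^ (α₁₁ - α₂₁) * |h₁₁| ^ 2 / |h₂₁| ^ 2
      = |h₁₁| ^ 2 / |h₂₁| ^ 2 * P ^ (α₁₁ - α₂₁) := by ring
  have e4 : P ^ (α₁₂ - max (α₂₂ - α₂₁) 0) * |h₁₂| ^ 2 / |h₂₂| ^ 2
      = |h₁₂| ^ 2 / |h₂₂| ^ 2 * P ^ (α₁₂ - max (α₂₂ - α₂₁) 0) := by ring

  rw [e1, e2, e3, e4]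
  field_simp
end
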